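/- arXiv:math/0204337 — 3 statements merged into one kernel-verified Lean document; each statement's English description precedes it below -/
import Mathlib

section
/- Let H be a quasi-Hopf algebra with coassociator φ and quasi-antipode (S, α, β). Then the map φ: H⊗H → H⊗H, g⊗h ↦ g·S(φ⁻¹⁽¹⁾)·α·φ⁻¹⁽²⁾·h₍₁₎ ⊗ φ⁻¹⁽³⁾·h₍₂₎ (written with φ⁻¹ = φ⁻¹⁽¹⁾⊗φ⁻¹⁽²⁾⊗φ⁻¹⁽³⁾ and Δ(h) = h₍₁₎⊗h₍₂₎, with implicit summation) is bijective, with inverse g⊗h ↦ g·φ⁽¹⁾·β·S(h₍₁₎·φ⁽²⁾) ⊗ h₍₂₎·φ⁽³⁾. -/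
open TensorProduct LinearMap

/-- A quasibialgebra over a field `k`. -/
structure QuasiBialgebra (k : Type*) [Field k] (H : Type*) [Ring H] [Algebra k H] where
  comul : H →ₐ[k] H ⊗[k] H
  counit : H →ₐ[k] k
  assoc : H ⊗[k] (H ⊗[k] H)
  assocInv : H ⊗[k] (H ⊗[k] H)
  assoc_mul_inv : assoc * assocInv = 1
  inv_mul_assoc : assocInv * assoc = 1
  counit_comul_left : ∀ h : H,
    (TensorProduct.lid k H) ((LinearMap.rTensor H counit.toLinearMap) (comul h)) = h
  counit_comul_right : ∀ h : H,
    (TensorProduct.rid k H) ((LinearMap.lTensor H counit.toLinearMap) (comul h)) = h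
  quasi_coassoc : ∀ h : H,
    (Algebra.TensorProduct.map (AlgHom.id k H) comul) (comul h) * assoc
      = assoc * (Algebra.TensorProduct.assoc k k k H H H)
          ((Algebra.TensorProduct.map comul (AlgHom.id k H)) (comul h))
  pentagon :
    (Algebra.TensorProduct.map (AlgHom.id k H)
        (Algebra.TensorProduct.map (AlgHom.id k H) comul)) assoc
      * (Algebra.TensorProduct.assoc k k k H H (H ⊗[k] H))
          ((Algebra.TensorProduct.map comul (AlgHom.id k (H ⊗[k] H))) assoc)
    = (1 : H) ⊗ₜ[k] assoc
      * (Algebra.TensorProduct.map (AlgHom.id k H)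
          ((Algebra.TensorProduct.assoc k k k H H H).toAlgHom.comp
            (Algebra.TensorProduct.map comul (AlgHom.id k H)))) assoc
      * (Algebra.TensorProduct.map (AlgHom.id k H)
          (Algebra.TensorProduct.assoc k k k H H H).toAlgHom)
          ((Algebra.TensorProduct.assoc k k k H (H ⊗[k] H) H) (assoc ⊗ₜ[k] (1 : H)))
  counit_mid :
    (Algebra.TensorProduct.map (AlgHom.id k H)
        ((Algebra.TensorProduct.lid k H).toAlgHom.comp
          (Algebra.TensorProduct.map counit (AlgHom.id k H)))) assoc = 1

variable {k : Type*} [Field k] {H : Type*} [Ring H] [Algebra k H]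

/-- The quasi-antipode axioms for a quasibialgebra. -/
structure IsQuasiAntipode (qb : QuasiBialgebra k H) (S : H →ₗ[k] H) (α β : H) : Prop where
  map_one : S 1 = 1
  map_mul : ∀ a b : H, S (a * b) = S b * S a
  antipode_left : ∀ h : H,
    LinearMap.mul' k H ((TensorProduct.map (LinearMap.mulRight k α ∘ₗ S) LinearMap.id)
      (qb.comul h)) = qb.counit h • α
  antipode_right : ∀ h : H,
    LinearMap.mul' k H ((TensorProduct.map LinearMap.id (LinearMap.mulLeft k β ∘ₗ S))
      (qb.comul h)) = qb.counit h • β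
  assoc_antipode :
    LinearMap.mul' k H ((TensorProduct.map (LinearMap.mulRight k β)
        (LinearMap.mul' k H ∘ₗ TensorProduct.map (LinearMap.mulRight k α ∘ₗ S) LinearMap.id))
      qb.assoc) = 1
  assocInv_antipode :
    LinearMap.mul' k H ((TensorProduct.map (LinearMap.mulRight k α ∘ₗ S)
        (LinearMap.mul' k H ∘ₗ TensorProduct.map (LinearMap.mulRight k β) S))
      qb.assocInv) = 1

/-- A quasi-Hopf algebra. -/
structure QuasiHopf (k : Type*) [Field k] (H : Type*) [Ring H] [Algebra k H]
    extends QuasiBialgebra k H where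
  antipode : H →ₗ[k] H
  alpha : H
  beta : H
  isQuasiAntipode : IsQuasiAntipode toQuasiBialgebra antipode alpha beta

/-- The element `w = Σ S(φ⁻¹⁽¹⁾)·α·φ⁻¹⁽²⁾ ⊗ φ⁻¹⁽³⁾` of `H ⊗ H`. -/
noncomputable def drinfeldW (qh : QuasiHopf k H) : H ⊗[k] H :=
  (LinearMap.rTensor H
      (LinearMap.mul' k H ∘ₗ
        TensorProduct.map (LinearMap.mulRight k qh.alpha ∘ₗ qh.antipode) LinearMap.id))
    ((TensorProduct.assoc k H H H).symm qh.assocInv)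

/-- Drinfeld's canonical map `g ⊗ h ↦ g·S(φ⁻¹⁽¹⁾)·α·φ⁻¹⁽²⁾·h₍₁₎ ⊗ φ⁻¹⁽³⁾·h₍₂₎`. -/
noncomputable def drinfeldCan (qh : QuasiHopf k H) : H ⊗[k] H →ₗ[k] H ⊗[k] H :=
  LinearMap.rTensor H (LinearMap.mul' k H)
    ∘ₗ (TensorProduct.assoc k H H H).symm.toLinearMap
    ∘ₗ LinearMap.lTensor H (LinearMap.mulLeft k (drinfeldW qh) ∘ₗ qh.comul.toLinearMap)

/-- `h ↦ Σ φ⁽¹⁾·β·S(h₍₁₎·φ⁽²⁾) ⊗ h₍₂₎·φ⁽³⁾`. -/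
noncomputable def drinfeldInvAux (qh : QuasiHopf k H) : H →ₗ[k] H ⊗[k] H :=
  LinearMap.rTensor H
      (LinearMap.mul' k H ∘ₗ TensorProduct.map (LinearMap.mulRight k qh.beta) qh.antipode)
    ∘ₗ (TensorProduct.assoc k H H H).symm.toLinearMap
    ∘ₗ LinearMap.mulRight k qh.assoc
    ∘ₗ (TensorProduct.mk k H (H ⊗[k] H)) 1
    ∘ₗ qh.comul.toLinearMap

/-- The inverse of Drinfeld's canonical map:
`g ⊗ h ↦ g·φ⁽¹⁾·β·S(h₍₁₎·φ⁽²⁾) ⊗ h₍₂₎·φ⁽³⁾`. -/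
noncomputable def drinfeldCanInv (qh : QuasiHopf k H) : H ⊗[k] H →ₗ[k] H ⊗[k] H :=
  LinearMap.rTensor H (LinearMap.mul' k H)
    ∘ₗ (TensorProduct.assoc k H H H).symm.toLinearMap
    ∘ₗ LinearMap.lTensor H (drinfeldInvAux qh)


/-! ### Instance shortcuts to speed up / enable instance search on iterated tensors -/

namespace DrinfeldAux

variable {k : Type*} [Field k] {H : Type*} [Ring H] [Algebra k H]

noncomputable instance (priority := 5000) ringA2 : Ring (H ⊗[k] H) := inferInstance
noncomputable instance (priority := 5000) algA2 : Algebra k (H ⊗[k] H) := inferInstance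
set_option synthInstance.maxHeartbeats 400000 in
noncomputable instance (priority := 5000) ringA3 : Ring (H ⊗[k] (H ⊗[k] H)) := inferInstance
set_option synthInstance.maxHeartbeats 400000 in
noncomputable instance (priority := 5000) algA3 : Algebra k (H ⊗[k] (H ⊗[k] H)) := inferInstance
set_option synthInstance.maxHeartbeats 400000 in
noncomputable instance (priority := 5000) ringA4 :
    Ring (H ⊗[k] (H ⊗[k] (H ⊗[k] H))) := inferInstance
set_option synthInstance.maxHeartbeats 400000 in
noncomputable instance (priority := 5000) algA4 :
    Algebra k (H ⊗[k] (H ⊗[k] (H ⊗[k] H))) := inferInstance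

end DrinfeldAux

/-! ### Auxiliary development for the proof -/

namespace DrinfeldAux

open Algebra.TensorProduct (includeLeft includeRight)

variable {k : Type*} [Field k] {H : Type*} [Ring H] [Algebra k H]

section Defs

variable (qh : QuasiHopf k H)

/-- `x ↦ x ⊗ 1`. -/
noncomputable def iL : H →ₗ[k] H ⊗[k] H := (TensorProduct.mk k H H).flip 1

@[simp] lemma iL_apply (x : H) : iL (k := k) x = x ⊗ₜ 1 := rfl

/-- `a ⊗ b ↦ S(a)·α·b`. -/
noncomputable def sAl : H ⊗[k] H →ₗ[k] H :=
  LinearMap.mul' k H ∘ₗ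
    TensorProduct.map (LinearMap.mulRight k qh.alpha ∘ₗ qh.antipode) LinearMap.id

/-- `a ⊗ b ↦ a·β·S(b)` (β inside). -/
noncomputable def bSl : H ⊗[k] H →ₗ[k] H :=
  LinearMap.mul' k H ∘ₗ
    TensorProduct.map LinearMap.id (LinearMap.mulLeft k qh.beta ∘ₗ qh.antipode)

/-- `a ⊗ b ↦ a·β·S(b)` (other association). -/
noncomputable def pbl : H ⊗[k] H →ₗ[k] H :=
  LinearMap.mul' k H ∘ₗ
    TensorProduct.map (LinearMap.mulRight k qh.beta) qh.antipode

@[simp] lemma sAl_tmul (a b : H) :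
    sAl qh (a ⊗ₜ b) = qh.antipode a * qh.alpha * b := by
  simp [sAl]

@[simp] lemma bSl_tmul (a b : H) :
    bSl qh (a ⊗ₜ b) = a * (qh.beta * qh.antipode b) := by
  simp [bSl]

@[simp] lemma pbl_tmul (a b : H) :
    pbl qh (a ⊗ₜ b) = a * qh.beta * qh.antipode b := by
  simp [pbl]

lemma sAl_comul (h : H) : sAl qh (qh.comul h) = qh.counit h • qh.alpha :=
  qh.isQuasiAntipode.antipode_left h

lemma bSl_comul (h : H) : bSl qh (qh.comul h) = qh.counit h • qh.beta :=
  qh.isQuasiAntipode.antipode_right h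

lemma S_mul (a b : H) : qh.antipode (a * b) = qh.antipode b * qh.antipode a :=
  qh.isQuasiAntipode.map_mul a b

@[simp] lemma S_one : qh.antipode 1 = 1 := qh.isQuasiAntipode.map_one

/-- counit collapse `a ⊗ b ↦ ε(a)•b`. -/
noncomputable def clps : H ⊗[k] H →ₗ[k] H :=
  (TensorProduct.lid k H).toLinearMap ∘ₗ LinearMap.rTensor H qh.counit.toLinearMap

@[simp] lemma clps_tmul (a b : H) : clps qh (a ⊗ₜ b) = qh.counit a • b := by
  simp [clps]

lemma clps_comul (h : H) : clps qh (qh.comul h) = h := qh.counit_comul_left h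

/-- `ε ⊗ id : H ⊗ H →ₐ H`. -/
noncomputable def epsH : H ⊗[k] H →ₐ[k] H :=
  (Algebra.TensorProduct.lid k H).toAlgHom.comp
    (Algebra.TensorProduct.map qh.counit (AlgHom.id k H))

@[simp] lemma epsH_tmul (a b : H) : epsH qh (a ⊗ₜ b) = qh.counit a • b := by
  simp [epsH, Algebra.TensorProduct.lid_tmul]

/-- `ε ⊗ id : H ⊗ (H ⊗ H) →ₐ H ⊗ H`. -/
noncomputable def epsA : H ⊗[k] (H ⊗[k] H) →ₐ[k] H ⊗[k] H :=
  (Algebra.TensorProduct.lid k (H ⊗[k] H)).toAlgHom.comp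
    (Algebra.TensorProduct.map qh.counit (AlgHom.id k (H ⊗[k] H)))

@[simp] lemma epsA_tmul (a : H) (m : H ⊗[k] H) : epsA qh (a ⊗ₜ m) = qh.counit a • m := by
  simp [epsA, Algebra.TensorProduct.lid_tmul]

/-- `id ⊗ ε ⊗ id`. -/
noncomputable def emid : H ⊗[k] (H ⊗[k] H) →ₐ[k] H ⊗[k] H :=
  Algebra.TensorProduct.map (AlgHom.id k H) (epsH qh)

@[simp] lemma emid_tmul (a : H) (m : H ⊗[k] H) : emid qh (a ⊗ₜ m) = a ⊗ₜ epsH qh m := by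
  simp [emid]

/-- collapse the first two factors of a fourfold tensor by ε. -/
noncomputable def PsiP : H ⊗[k] (H ⊗[k] (H ⊗[k] H)) →ₐ[k] H ⊗[k] H :=
  (epsA qh).comp (Algebra.TensorProduct.map (AlgHom.id k H) (epsA qh))

@[simp] lemma PsiP_tmul (a : H) (y : H ⊗[k] (H ⊗[k] H)) :
    PsiP qh (a ⊗ₜ y) = qh.counit a • epsA qh y := by
  simp [PsiP]

/-- `ε ⊗ ε ⊗ id : H ⊗ (H ⊗ H) →ₐ H`. -/
noncomputable def theta : H ⊗[k] (H ⊗[k] H) →ₐ[k] H :=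
  (epsH qh).comp (Algebra.TensorProduct.map (AlgHom.id k H) (epsH qh))

@[simp] lemma theta_tmul (a : H) (m : H ⊗[k] H) :
    theta qh (a ⊗ₜ m) = qh.counit a • epsH qh m := by
  simp [theta]

end Defs

end DrinfeldAux

namespace DrinfeldAux

variable {k : Type*} [Field k] {H : Type*} [Ring H] [Algebra k H]

section Pent

variable (qh : QuasiHopf k H)

/-- `id ⊗ id ⊗ Δ`. -/
noncomputable def P1 : H ⊗[k] (H ⊗[k] H) →ₐ[k] H ⊗[k] (H ⊗[k] (H ⊗[k] H)) :=
  Algebra.TensorProduct.map (AlgHom.id k H)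
    (Algebra.TensorProduct.map (AlgHom.id k H) qh.comul)

/-- `Δ ⊗ id ⊗ id` (associated). -/
noncomputable def P2 : H ⊗[k] (H ⊗[k] H) →ₐ[k] H ⊗[k] (H ⊗[k] (H ⊗[k] H)) :=
  (Algebra.TensorProduct.assoc k k k H H (H ⊗[k] H)).toAlgHom.comp
    (Algebra.TensorProduct.map qh.comul (AlgHom.id k (H ⊗[k] H)))

/-- `1 ⊗ ·`. -/
noncomputable def P3 : H ⊗[k] (H ⊗[k] H) →ₐ[k] H ⊗[k] (H ⊗[k] (H ⊗[k] H)) :=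
  Algebra.TensorProduct.includeRight

/-- `id ⊗ Δ ⊗ id` (associated). -/
noncomputable def P4 : H ⊗[k] (H ⊗[k] H) →ₐ[k] H ⊗[k] (H ⊗[k] (H ⊗[k] H)) :=
  Algebra.TensorProduct.map (AlgHom.id k H)
    ((Algebra.TensorProduct.assoc k k k H H H).toAlgHom.comp
      (Algebra.TensorProduct.map qh.comul (AlgHom.id k H)))

/-- `· ⊗ 1` (associated). -/
noncomputable def P5 : H ⊗[k] (H ⊗[k] H) →ₐ[k] H ⊗[k] (H ⊗[k] (H ⊗[k] H)) :=
  (Algebra.TensorProduct.map (AlgHom.id k H)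
      (Algebra.TensorProduct.assoc k k k H H H).toAlgHom).comp
    ((Algebra.TensorProduct.assoc k k k H (H ⊗[k] H) H).toAlgHom.comp
      Algebra.TensorProduct.includeLeft)

@[simp] lemma P1_tmul (a : H) (m : H ⊗[k] H) :
    P1 qh (a ⊗ₜ m) =
      a ⊗ₜ (Algebra.TensorProduct.map (AlgHom.id k H) qh.comul m) := by
  simp [P1]

@[simp] lemma P2_tmul (a : H) (m : H ⊗[k] H) :
    P2 qh (a ⊗ₜ m) =
      (Algebra.TensorProduct.assoc k k k H H (H ⊗[k] H)) (qh.comul a ⊗ₜ m) := by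
  simp [P2]

@[simp] lemma P3_apply (x : H ⊗[k] (H ⊗[k] H)) : P3 (k := k) (H := H) x = 1 ⊗ₜ x := rfl

@[simp] lemma P4_tmul (a : H) (m : H ⊗[k] H) :
    P4 qh (a ⊗ₜ m) =
      a ⊗ₜ ((Algebra.TensorProduct.assoc k k k H H H)
        ((Algebra.TensorProduct.map qh.comul (AlgHom.id k H)) m)) := by
  simp [P4]

@[simp] lemma P5_tmul (a : H) (m : H ⊗[k] H) :
    P5 (k := k) (H := H) (a ⊗ₜ m) =
      a ⊗ₜ ((Algebra.TensorProduct.assoc k k k H H H) (m ⊗ₜ 1)) := by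
  simp [P5]

lemma pent5 :
    P1 qh qh.assoc * P2 qh qh.assoc
      = P3 qh.assoc * P4 qh qh.assoc * P5 (k := k) (H := H) qh.assoc := by
  simpa [P1, P2, P3, P4, P5] using qh.pentagon

lemma emid_phi : emid qh qh.assoc = 1 := qh.counit_mid

lemma emid_phiInv : emid qh qh.assocInv = 1 := by
  have h := congrArg (emid qh) qh.assoc_mul_inv
  rwa [map_mul, map_one, emid_phi, one_mul] at h

end Pent

end DrinfeldAux

namespace DrinfeldAux

variable {k : Type*} [Field k] {H : Type*} [Ring H] [Algebra k H]

set_option synthInstance.maxHeartbeats 400000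

section PsiCollapse

variable (qh : QuasiHopf k H)

lemma SB1 (d m : H ⊗[k] H) :
    PsiP qh ((Algebra.TensorProduct.assoc k k k H H (H ⊗[k] H)) (d ⊗ₜ m))
      = qh.counit (clps qh d) • m := by
  induction d using TensorProduct.induction_on with
  | zero => simp
  | tmul p q => simp [Algebra.TensorProduct.assoc_tmul, smul_smul]
  | add x y hx hy => simp [add_tmul, map_add, hx, hy, add_smul]

lemma SB2' (d : H ⊗[k] H) (c : H) :
    epsA qh ((Algebra.TensorProduct.assoc k k k H H H) (d ⊗ₜ c)) = clps qh d ⊗ₜ c := by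
  induction d using TensorProduct.induction_on with
  | zero => simp
  | tmul p q => simp [Algebra.TensorProduct.assoc_tmul, smul_tmul']
  | add x y hx hy => simp [add_tmul, map_add, hx, hy]

lemma SB4 (m : H ⊗[k] H) : epsH qh m = clps qh m := by
  induction m using TensorProduct.induction_on with
  | zero => simp
  | tmul p q => simp
  | add x y hx hy => simp [map_add, hx, hy]

lemma SB5 (m : H ⊗[k] H) :
    epsA qh ((Algebra.TensorProduct.map (AlgHom.id k H) qh.comul) m)
      = qh.comul (epsH qh m) := by
  induction m using TensorProduct.induction_on with
  | zero => simp
  | tmul p q => simp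
  | add x y hx hy => simp [map_add, hx, hy]

lemma SB6 (m : H ⊗[k] H) :
    epsA qh ((Algebra.TensorProduct.assoc k k k H H H)
      ((Algebra.TensorProduct.map qh.comul (AlgHom.id k H)) m)) = m := by
  induction m using TensorProduct.induction_on with
  | zero => simp
  | tmul p q => simp [SB2', clps_comul]
  | add x y hx hy => simp [map_add, hx, hy]

lemma Psi_P1 (x : H ⊗[k] (H ⊗[k] H)) : PsiP qh (P1 qh x) = qh.comul (theta qh x) := by
  induction x using TensorProduct.induction_on with
  | zero => simp
  | tmul a m => simp [SB5]
  | add x y hx hy => simp [map_add, hx, hy]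

lemma Psi_P2 (x : H ⊗[k] (H ⊗[k] H)) : PsiP qh (P2 qh x) = epsA qh x := by
  induction x using TensorProduct.induction_on with
  | zero => simp
  | tmul a m => simp [SB1, clps_comul]
  | add x y hx hy => simp [map_add, hx, hy]

lemma Psi_P3 (x : H ⊗[k] (H ⊗[k] H)) : PsiP qh (P3 x) = epsA qh x := by
  rw [P3_apply]
  simp

lemma Psi_P4 (x : H ⊗[k] (H ⊗[k] H)) : PsiP qh (P4 qh x) = epsA qh x := by
  induction x using TensorProduct.induction_on with
  | zero => simp
  | tmul a m => simp [SB6]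
  | add x y hx hy => simp [map_add, hx, hy]

lemma Psi_P5 (x : H ⊗[k] (H ⊗[k] H)) :
    PsiP qh (P5 (k := k) (H := H) x) = theta qh x ⊗ₜ 1 := by
  induction x using TensorProduct.induction_on with
  | zero => simp
  | tmul a m => simp [SB2', SB4, smul_tmul']
  | add x y hx hy => simp [map_add, hx, hy, add_tmul]

lemma theta_eq (x : H ⊗[k] (H ⊗[k] H)) : theta qh x = clps qh (emid qh x) := by
  induction x using TensorProduct.induction_on with
  | zero => simp
  | tmul a m => simp [SB4]
  | add x y hx hy => simp [map_add, hx, hy]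

lemma theta_phi : theta qh qh.assoc = 1 := by
  rw [theta_eq, emid_phi, Algebra.TensorProduct.one_def]
  simp

lemma epsA_phi : epsA qh qh.assoc = 1 := by
  have h := congrArg (PsiP qh) (pent5 qh)
  rw [map_mul, map_mul, map_mul, Psi_P1, Psi_P2, Psi_P3, Psi_P4, Psi_P5, theta_phi,
    map_one] at h
  -- h : epsA φ = epsA φ * epsA φ * (1 ⊗ₜ 1)
  have h1 : (1 : H) ⊗ₜ[k] (1 : H) = (1 : H ⊗[k] H) := (Algebra.TensorProduct.one_def).symm
  rw [h1, mul_one, one_mul] at h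
  have huv : epsA qh qh.assoc * epsA qh qh.assocInv = 1 := by
    rw [← map_mul, qh.assoc_mul_inv, map_one]
  calc epsA qh qh.assoc = epsA qh qh.assoc * 1 := (mul_one _).symm
    _ = epsA qh qh.assoc * (epsA qh qh.assoc * epsA qh qh.assocInv) := by rw [huv]
    _ = (epsA qh qh.assoc * epsA qh qh.assoc) * epsA qh qh.assocInv := (mul_assoc _ _ _).symm
    _ = epsA qh qh.assoc * epsA qh qh.assocInv := by rw [← h]
    _ = 1 := huv

lemma epsA_phiInv : epsA qh qh.assocInv = 1 := by
  have huv : epsA qh qh.assoc * epsA qh qh.assocInv = 1 := by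
    rw [← map_mul, qh.assoc_mul_inv, map_one]
  rwa [epsA_phi, one_mul] at huv

end PsiCollapse

end DrinfeldAux

namespace DrinfeldAux

variable {k : Type*} [Field k] {H : Type*} [Ring H] [Algebra k H]

set_option synthInstance.maxHeartbeats 400000

section Lam

variable (qh : QuasiHopf k H)

/-- Fourfold collapse `a ⊗ b ⊗ c ⊗ d ↦ (μ(a⊗b)·ν(c)) ⊗ d`. -/
noncomputable def lam4 (μ : H ⊗[k] H →ₗ[k] H) (ν : H →ₗ[k] H) :
    H ⊗[k] (H ⊗[k] (H ⊗[k] H)) →ₗ[k] H ⊗[k] H :=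
  LinearMap.mul' k (H ⊗[k] H)
    ∘ₗ LinearMap.rTensor (H ⊗[k] H) (iL ∘ₗ μ)
    ∘ₗ (TensorProduct.assoc k H H (H ⊗[k] H)).symm.toLinearMap
    ∘ₗ LinearMap.lTensor H (LinearMap.lTensor H (LinearMap.rTensor H ν))

@[simp] lemma lam4_tmul (μ : H ⊗[k] H →ₗ[k] H) (ν : H →ₗ[k] H) (a b : H)
    (z : H ⊗[k] H) :
    lam4 μ ν (a ⊗ₜ (b ⊗ₜ z)) = (μ (a ⊗ₜ b) ⊗ₜ 1) * LinearMap.rTensor H ν z := by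
  simp [lam4, TensorProduct.assoc_symm_tmul]

lemma lam4_tmul4 (μ : H ⊗[k] H →ₗ[k] H) (ν : H →ₗ[k] H) (a b c d : H) :
    lam4 μ ν (a ⊗ₜ (b ⊗ₜ (c ⊗ₜ d))) = (μ (a ⊗ₜ b) * ν c) ⊗ₜ d := by
  simp [Algebra.TensorProduct.tmul_mul_tmul]

/-- `a ⊗ b ↦ S(a)·b`. -/
noncomputable def mFp : H ⊗[k] H →ₗ[k] H :=
  LinearMap.mul' k H ∘ₗ TensorProduct.map qh.antipode LinearMap.id

@[simp] lemma mFp_tmul (a b : H) : mFp qh (a ⊗ₜ b) = qh.antipode a * b := by simp [mFp]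

/-- `a ⊗ b ↦ a·β·(S(b)·α)`. -/
noncomputable def mG : H ⊗[k] H →ₗ[k] H :=
  LinearMap.mul' k H ∘ₗ
    TensorProduct.map (LinearMap.mulRight k qh.beta)
      (LinearMap.mulRight k qh.alpha ∘ₗ qh.antipode)

@[simp] lemma mG_tmul (a b : H) :
    mG qh (a ⊗ₜ b) = a * qh.beta * (qh.antipode b * qh.alpha) := by simp [mG]

/-- `a ⊗ b ↦ a·β·S(b)`. -/
noncomputable def mGp : H ⊗[k] H →ₗ[k] H :=
  LinearMap.mul' k H ∘ₗ
    TensorProduct.map (LinearMap.mulRight k qh.beta) qh.antipode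

@[simp] lemma mGp_tmul (a b : H) :
    mGp qh (a ⊗ₜ b) = a * qh.beta * qh.antipode b := by simp [mGp]

/-- `a ⊗ b ↦ a·(S(b)·α)`. -/
noncomputable def mGpp : H ⊗[k] H →ₗ[k] H :=
  LinearMap.mul' k H ∘ₗ
    TensorProduct.map LinearMap.id (LinearMap.mulRight k qh.alpha ∘ₗ qh.antipode)

@[simp] lemma mGpp_tmul (a b : H) :
    mGpp qh (a ⊗ₜ b) = a * (qh.antipode b * qh.alpha) := by simp [mGpp]

/-- `c ↦ β·S(c)`. -/
noncomputable def nB : H →ₗ[k] H := LinearMap.mulLeft k qh.beta ∘ₗ qh.antipode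

@[simp] lemma nB_apply (c : H) : nB qh c = qh.beta * qh.antipode c := rfl

noncomputable def lamF := lam4 (sAl qh) (nB qh)
noncomputable def lamFp := lam4 (mFp qh) (nB qh)
noncomputable def lamFpp := lam4 (sAl qh) qh.antipode
noncomputable def lamG := lam4 (mG qh) (LinearMap.id (R := k) (M := H))
noncomputable def lamGp := lam4 (mGp qh) (LinearMap.id (R := k) (M := H))
noncomputable def lamGpp := lam4 (mGpp qh) (LinearMap.id (R := k) (M := H))

/-- `m ↦ 1 ⊗ 1 ⊗ m`. -/
noncomputable def j34 : H ⊗[k] H →ₐ[k] H ⊗[k] (H ⊗[k] (H ⊗[k] H)) :=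
  (Algebra.TensorProduct.includeRight :
      (H ⊗[k] (H ⊗[k] H)) →ₐ[k] H ⊗[k] (H ⊗[k] (H ⊗[k] H))).comp
    (Algebra.TensorProduct.includeRight : (H ⊗[k] H) →ₐ[k] H ⊗[k] (H ⊗[k] H))

@[simp] lemma j34_apply (m : H ⊗[k] H) :
    j34 (k := k) (H := H) m = 1 ⊗ₜ (1 ⊗ₜ m) := rfl

/-- `p ⊗ q ↦ p ⊗ 1 ⊗ 1 ⊗ q`. -/
noncomputable def j14 : H ⊗[k] H →ₐ[k] H ⊗[k] (H ⊗[k] (H ⊗[k] H)) :=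
  Algebra.TensorProduct.map (AlgHom.id k H)
    ((Algebra.TensorProduct.includeRight : (H ⊗[k] H) →ₐ[k] H ⊗[k] (H ⊗[k] H)).comp
      (Algebra.TensorProduct.includeRight : H →ₐ[k] H ⊗[k] H))

@[simp] lemma j14_tmul (p q : H) :
    j14 (k := k) (H := H) (p ⊗ₜ q) = p ⊗ₜ ((1 : H) ⊗ₜ ((1 : H) ⊗ₜ q)) := by
  simp [j14]

end Lam

end DrinfeldAux

namespace DrinfeldAux

variable {k : Type*} [Field k] {H : Type*} [Ring H] [Algebra k H]

set_option synthInstance.maxHeartbeats 400000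

section Ind

lemma A4ind2 {P : H ⊗[k] (H ⊗[k] (H ⊗[k] H)) → Prop}
    (h0 : P 0) (hadd : ∀ x y, P x → P y → P (x + y))
    (ht : ∀ (a b : H) (z : H ⊗[k] H), P (a ⊗ₜ (b ⊗ₜ z))) : ∀ x, P x := by
  intro x
  induction x using TensorProduct.induction_on with
  | zero => exact h0
  | add x y hx hy => exact hadd x y hx hy
  | tmul a y =>
    induction y using TensorProduct.induction_on with
    | zero => rw [TensorProduct.tmul_zero]; exact h0
    | add u v hu hv => rw [TensorProduct.tmul_add]; exact hadd _ _ hu hv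
    | tmul b z => exact ht a b z

lemma A4ind3 {P : H ⊗[k] (H ⊗[k] (H ⊗[k] H)) → Prop}
    (h0 : P 0) (hadd : ∀ x y, P x → P y → P (x + y))
    (ht : ∀ a b c d : H, P (a ⊗ₜ (b ⊗ₜ (c ⊗ₜ d)))) : ∀ x, P x := by
  refine A4ind2 h0 hadd ?_
  intro a b z
  induction z using TensorProduct.induction_on with
  | zero => rw [TensorProduct.tmul_zero, TensorProduct.tmul_zero]; exact h0
  | add u v hu hv =>
    rw [TensorProduct.tmul_add, TensorProduct.tmul_add]; exact hadd _ _ hu hv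
  | tmul c d => exact ht a b c d

lemma rT_one_right (ν : H →ₗ[k] H) (z : H ⊗[k] H) (q : H) :
    LinearMap.rTensor H ν (z * ((1 : H) ⊗ₜ q))
      = LinearMap.rTensor H ν z * ((1 : H) ⊗ₜ q) := by
  induction z using TensorProduct.induction_on with
  | zero => simp
  | tmul p r => simp [Algebra.TensorProduct.tmul_mul_tmul]
  | add x y hx hy => simp [add_mul, map_add, hx, hy]

end Ind

section ACollapse

variable (qh : QuasiHopf k H)

lemma ALa (d m : H ⊗[k] H) (E : H ⊗[k] (H ⊗[k] (H ⊗[k] H))) :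
    lamF qh ((Algebra.TensorProduct.assoc k k k H H (H ⊗[k] H)) (d ⊗ₜ m) * E)
      = lamFp qh (((1 : H) ⊗ₜ (sAl qh d ⊗ₜ m)) * E) := by
  induction d using TensorProduct.induction_on with
  | zero => simp [lamF, lamFp]
  | add x y hx hy =>
    simp only [add_tmul, map_add, add_mul, hx, hy, LinearMap.map_add,
      TensorProduct.tmul_add, TensorProduct.add_tmul]
  | tmul p q =>
    induction E using A4ind2 with
    | h0 => simp [lamF, lamFp]
    | hadd x y hx hy => simp only [mul_add, map_add, hx, hy]
    | ht a b z =>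
      simp [lamF, lamFp, Algebra.TensorProduct.assoc_tmul,
        Algebra.TensorProduct.tmul_mul_tmul, S_mul, mul_assoc]

lemma ALb (m : H ⊗[k] H) (E : H ⊗[k] (H ⊗[k] (H ⊗[k] H))) :
    lamFp qh (((1 : H) ⊗ₜ (qh.alpha ⊗ₜ m)) * E)
      = lamF qh (((1 : H) ⊗ₜ ((1 : H) ⊗ₜ m)) * E) := by
  induction E using A4ind2 with
  | h0 => simp [lamF, lamFp]
  | hadd x y hx hy => simp only [mul_add, map_add, hx, hy]
  | ht a b z =>
    simp [lamF, lamFp, Algebra.TensorProduct.tmul_mul_tmul, mul_assoc]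

lemma AL1 (t : H ⊗[k] (H ⊗[k] H)) (E : H ⊗[k] (H ⊗[k] (H ⊗[k] H))) :
    lamF qh (P2 qh t * E) = lamF qh (j34 (epsA qh t) * E) := by
  induction t using TensorProduct.induction_on with
  | zero => simp [lamF]
  | add x y hx hy => simp only [map_add, add_mul, LinearMap.map_add, hx, hy]
  | tmul a m =>
    rw [P2_tmul, ALa, sAl_comul]
    have h1 : ((1 : H) ⊗ₜ[k] ((qh.counit a • qh.alpha) ⊗ₜ[k] m))
        = qh.counit a • ((1 : H) ⊗ₜ[k] (qh.alpha ⊗ₜ[k] m)) := by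
      simp only [TensorProduct.smul_tmul, TensorProduct.tmul_smul]
    rw [h1, smul_mul_assoc, map_smul, ALb, epsA_tmul]
    have h2 : j34 (k := k) (H := H) (qh.counit a • m)
        = qh.counit a • ((1 : H) ⊗ₜ[k] ((1 : H) ⊗ₜ[k] m)) := by
      rw [j34_apply]
      simp only [TensorProduct.tmul_smul]
    rw [h2, smul_mul_assoc, map_smul]

lemma AL2a (a : H) (d : H ⊗[k] H) (v : H) (E : H ⊗[k] (H ⊗[k] (H ⊗[k] H))) :
    lamF qh (E * (a ⊗ₜ ((Algebra.TensorProduct.assoc k k k H H H) (d ⊗ₜ v))))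
      = lamFpp qh (E * (a ⊗ₜ (bSl qh d ⊗ₜ ((1 : H) ⊗ₜ v)))) := by
  induction d using TensorProduct.induction_on with
  | zero => simp [lamF, lamFpp]
  | add x y hx hy =>
    simp only [add_tmul, map_add, TensorProduct.tmul_add, TensorProduct.add_tmul,
      mul_add, LinearMap.map_add, hx, hy]
  | tmul p q =>
    induction E using A4ind3 with
    | h0 => simp [lamF, lamFpp]
    | hadd x y hx hy => simp only [add_mul, map_add, hx, hy]
    | ht e1 e2 e3 e4 =>
      simp [lamF, lamFpp, Algebra.TensorProduct.assoc_tmul,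
        Algebra.TensorProduct.tmul_mul_tmul, lam4_tmul4, S_mul, mul_assoc]

lemma AL2b (a : H) (v : H) (E : H ⊗[k] (H ⊗[k] (H ⊗[k] H))) :
    lamFpp qh (E * (a ⊗ₜ (qh.beta ⊗ₜ ((1 : H) ⊗ₜ v))))
      = lamF qh (E * (a ⊗ₜ ((1 : H) ⊗ₜ ((1 : H) ⊗ₜ v)))) := by
  induction E using A4ind3 with
  | h0 => simp [lamF, lamFpp]
  | hadd x y hx hy => simp only [add_mul, map_add, hx, hy]
  | ht e1 e2 e3 e4 =>
    simp [lamF, lamFpp, Algebra.TensorProduct.tmul_mul_tmul, lam4_tmul4, mul_assoc]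

lemma AL2 (t : H ⊗[k] (H ⊗[k] H)) (E : H ⊗[k] (H ⊗[k] (H ⊗[k] H))) :
    lamF qh (E * P4 qh t) = lamF qh (E * j14 (emid qh t)) := by
  induction t using TensorProduct.induction_on with
  | zero => simp [lamF]
  | add x y hx hy => simp only [map_add, mul_add, LinearMap.map_add, hx, hy]
  | tmul a m =>
    induction m using TensorProduct.induction_on with
    | zero => simp [lamF]
    | add x y hx hy =>
      simp only [TensorProduct.tmul_add, map_add, mul_add, LinearMap.map_add, hx, hy]
    | tmul u v =>
      rw [P4_tmul]
      simp only [Algebra.TensorProduct.map_tmul, AlgHom.coe_id, id_eq]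
      rw [AL2a, bSl_comul]
      have h1 : (a ⊗ₜ[k] ((qh.counit u • qh.beta) ⊗ₜ[k] ((1 : H) ⊗ₜ[k] v)))
          = qh.counit u • (a ⊗ₜ[k] (qh.beta ⊗ₜ[k] ((1 : H) ⊗ₜ[k] v))) := by
        simp only [TensorProduct.smul_tmul, TensorProduct.tmul_smul]
      rw [h1, mul_smul_comm, map_smul, AL2b]
      rw [emid_tmul, epsH_tmul]
      have h2 : j14 (k := k) (H := H) (a ⊗ₜ (qh.counit u • v))
          = qh.counit u • (a ⊗ₜ[k] ((1 : H) ⊗ₜ[k] ((1 : H) ⊗ₜ[k] v))) := by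
        rw [TensorProduct.tmul_smul, map_smul, j14_tmul]
      rw [h2, mul_smul_comm, map_smul]

/-- `a ⊗ b ⊗ c ↦ S(a)·α·(b·β·S(c))`, matching `assocInv_antipode`. -/
noncomputable def qa4l : H ⊗[k] (H ⊗[k] H) →ₗ[k] H :=
  LinearMap.mul' k H ∘ₗ
    TensorProduct.map (LinearMap.mulRight k qh.alpha ∘ₗ qh.antipode)
      (LinearMap.mul' k H ∘ₗ
        TensorProduct.map (LinearMap.mulRight k qh.beta) qh.antipode)

/-- `a ⊗ b ⊗ c ↦ a·β·(S(b)·α·c)`, matching `assoc_antipode`. -/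
noncomputable def qa3l : H ⊗[k] (H ⊗[k] H) →ₗ[k] H :=
  LinearMap.mul' k H ∘ₗ
    TensorProduct.map (LinearMap.mulRight k qh.beta)
      (LinearMap.mul' k H ∘ₗ
        TensorProduct.map (LinearMap.mulRight k qh.alpha ∘ₗ qh.antipode) LinearMap.id)

lemma qa4l_phiInv : qa4l qh qh.assocInv = 1 := qh.isQuasiAntipode.assocInv_antipode

lemma qa3l_phi : qa3l qh qh.assoc = 1 := qh.isQuasiAntipode.assoc_antipode

@[simp] lemma qa4l_tmul (a u v : H) :
    qa4l qh (a ⊗ₜ (u ⊗ₜ v))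
      = qh.antipode a * qh.alpha * (u * qh.beta * qh.antipode v) := by
  simp [qa4l]

@[simp] lemma qa3l_tmul (a u v : H) :
    qa3l qh (a ⊗ₜ (u ⊗ₜ v))
      = a * qh.beta * (qh.antipode u * qh.alpha * v) := by
  simp [qa3l]

lemma AL3 (t : H ⊗[k] (H ⊗[k] H)) :
    lamF qh (P5 (k := k) (H := H) t) = qa4l qh t ⊗ₜ 1 := by
  induction t using TensorProduct.induction_on with
  | zero => simp [lamF]
  | add x y hx hy => simp only [map_add, LinearMap.map_add, hx, hy, TensorProduct.add_tmul]
  | tmul a m =>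
    induction m using TensorProduct.induction_on with
    | zero => simp [lamF]
    | add x y hx hy =>
      simp only [TensorProduct.tmul_add, map_add, LinearMap.map_add, hx, hy,
        TensorProduct.add_tmul]
    | tmul u v =>
      rw [P5_tmul]
      simp [lamF, Algebra.TensorProduct.assoc_tmul, lam4_tmul4, mul_assoc]

lemma CAc (q : H) (E : H ⊗[k] (H ⊗[k] (H ⊗[k] H))) :
    lamF qh (E * ((1 : H) ⊗ₜ ((1 : H) ⊗ₜ ((1 : H) ⊗ₜ q))))
      = lamF qh E * ((1 : H) ⊗ₜ q) := by
  induction E using A4ind2 with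
  | h0 => simp [lamF]
  | hadd x y hx hy => simp only [add_mul, map_add, hx, hy]
  | ht a b z =>
    rw [Algebra.TensorProduct.tmul_mul_tmul, Algebra.TensorProduct.tmul_mul_tmul]
    simp only [mul_one, lamF, lam4_tmul]
    rw [rT_one_right, ← mul_assoc]

lemma CA (m : H ⊗[k] H) (E : H ⊗[k] (H ⊗[k] (H ⊗[k] H))) :
    lamF qh (E * P3 ((Algebra.TensorProduct.assoc k k k H H H)
        ((Algebra.TensorProduct.map qh.comul (AlgHom.id k H)) m)))
      = lamF qh E * ((1 : H) ⊗ₜ clps qh m) := by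
  induction m using TensorProduct.induction_on with
  | zero => simp [lamF]
  | add x y hx hy =>
    simp only [map_add, mul_add, LinearMap.map_add, hx, hy, TensorProduct.tmul_add]
  | tmul u v =>
    rw [P3_apply]
    simp only [Algebra.TensorProduct.map_tmul, AlgHom.coe_id, id_eq]
    rw [AL2a qh 1 (qh.comul u) v E, bSl_comul]
    have h1 : ((1 : H) ⊗ₜ[k] ((qh.counit u • qh.beta) ⊗ₜ[k] ((1 : H) ⊗ₜ[k] v)))
        = qh.counit u • ((1 : H) ⊗ₜ[k] (qh.beta ⊗ₜ[k] ((1 : H) ⊗ₜ[k] v))) := by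
      simp only [TensorProduct.smul_tmul, TensorProduct.tmul_smul]
    rw [h1, mul_smul_comm, map_smul, AL2b qh 1 v E, CAc]
    rw [clps_tmul, TensorProduct.tmul_smul, mul_smul_comm]

end ACollapse

end DrinfeldAux

namespace DrinfeldAux

variable {k : Type*} [Field k] {H : Type*} [Ring H] [Algebra k H]

set_option synthInstance.maxHeartbeats 400000

section GCollapse

variable (qh : QuasiHopf k H)

lemma GLa (d m : H ⊗[k] H) (E : H ⊗[k] (H ⊗[k] (H ⊗[k] H))) :
    lamG qh (E * (Algebra.TensorProduct.assoc k k k H H (H ⊗[k] H)) (d ⊗ₜ m))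
      = lamGpp qh (E * (bSl qh d ⊗ₜ ((1 : H) ⊗ₜ m))) := by
  induction d using TensorProduct.induction_on with
  | zero => simp [lamG, lamGpp]
  | add x y hx hy =>
    simp only [add_tmul, map_add, TensorProduct.tmul_add, TensorProduct.add_tmul,
      mul_add, LinearMap.map_add, hx, hy]
  | tmul p q =>
    induction E using A4ind2 with
    | h0 => simp [lamG, lamGpp]
    | hadd x y hx hy => simp only [add_mul, map_add, hx, hy]
    | ht a b z =>
      simp [lamG, lamGpp, Algebra.TensorProduct.assoc_tmul,
        Algebra.TensorProduct.tmul_mul_tmul, S_mul, mul_assoc]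

lemma GLb (m : H ⊗[k] H) (E : H ⊗[k] (H ⊗[k] (H ⊗[k] H))) :
    lamGpp qh (E * (qh.beta ⊗ₜ ((1 : H) ⊗ₜ m)))
      = lamG qh (E * ((1 : H) ⊗ₜ ((1 : H) ⊗ₜ m))) := by
  induction E using A4ind2 with
  | h0 => simp [lamG, lamGpp]
  | hadd x y hx hy => simp only [add_mul, map_add, hx, hy]
  | ht a b z =>
    simp [lamG, lamGpp, Algebra.TensorProduct.tmul_mul_tmul, mul_assoc]

lemma GL1 (t : H ⊗[k] (H ⊗[k] H)) (E : H ⊗[k] (H ⊗[k] (H ⊗[k] H))) :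
    lamG qh (E * P2 qh t) = lamG qh (E * j34 (epsA qh t)) := by
  induction t using TensorProduct.induction_on with
  | zero => simp [lamG]
  | add x y hx hy => simp only [map_add, mul_add, LinearMap.map_add, hx, hy]
  | tmul a m =>
    rw [P2_tmul, GLa, bSl_comul]
    have h1 : ((qh.counit a • qh.beta) ⊗ₜ[k] ((1 : H) ⊗ₜ[k] m))
        = qh.counit a • (qh.beta ⊗ₜ[k] ((1 : H) ⊗ₜ[k] m)) := by
      simp only [TensorProduct.smul_tmul, TensorProduct.tmul_smul]
    rw [h1, mul_smul_comm, map_smul, GLb, epsA_tmul]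
    have h2 : j34 (k := k) (H := H) (qh.counit a • m)
        = qh.counit a • ((1 : H) ⊗ₜ[k] ((1 : H) ⊗ₜ[k] m)) := by
      rw [j34_apply]
      simp only [TensorProduct.tmul_smul]
    rw [h2, mul_smul_comm, map_smul]

lemma GL2a (a : H) (d : H ⊗[k] H) (v : H) (E : H ⊗[k] (H ⊗[k] (H ⊗[k] H))) :
    lamG qh ((a ⊗ₜ ((Algebra.TensorProduct.assoc k k k H H H) (d ⊗ₜ v))) * E)
      = lamGp qh ((a ⊗ₜ ((1 : H) ⊗ₜ (sAl qh d ⊗ₜ v))) * E) := by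
  induction d using TensorProduct.induction_on with
  | zero => simp [lamG, lamGp]
  | add x y hx hy =>
    simp only [add_tmul, map_add, TensorProduct.tmul_add, TensorProduct.add_tmul,
      add_mul, LinearMap.map_add, hx, hy]
  | tmul p q =>
    induction E using A4ind3 with
    | h0 => simp [lamG, lamGp]
    | hadd x y hx hy => simp only [mul_add, map_add, hx, hy]
    | ht e1 e2 e3 e4 =>
      simp [lamG, lamGp, Algebra.TensorProduct.assoc_tmul,
        Algebra.TensorProduct.tmul_mul_tmul, lam4_tmul4, S_mul, mul_assoc]

lemma GL2b (a : H) (v : H) (E : H ⊗[k] (H ⊗[k] (H ⊗[k] H))) :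
    lamGp qh ((a ⊗ₜ ((1 : H) ⊗ₜ (qh.alpha ⊗ₜ v))) * E)
      = lamG qh ((a ⊗ₜ ((1 : H) ⊗ₜ ((1 : H) ⊗ₜ v))) * E) := by
  induction E using A4ind3 with
  | h0 => simp [lamG, lamGp]
  | hadd x y hx hy => simp only [mul_add, map_add, hx, hy]
  | ht e1 e2 e3 e4 =>
    simp [lamG, lamGp, Algebra.TensorProduct.tmul_mul_tmul, lam4_tmul4, mul_assoc]

lemma GL2 (t : H ⊗[k] (H ⊗[k] H)) (E : H ⊗[k] (H ⊗[k] (H ⊗[k] H))) :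
    lamG qh (P4 qh t * E) = lamG qh (j14 (emid qh t) * E) := by
  induction t using TensorProduct.induction_on with
  | zero => simp [lamG]
  | add x y hx hy => simp only [map_add, add_mul, LinearMap.map_add, hx, hy]
  | tmul a m =>
    induction m using TensorProduct.induction_on with
    | zero => simp [lamG]
    | add x y hx hy =>
      simp only [TensorProduct.tmul_add, map_add, add_mul, LinearMap.map_add, hx, hy]
    | tmul u v =>
      rw [P4_tmul]
      simp only [Algebra.TensorProduct.map_tmul, AlgHom.coe_id, id_eq]
      rw [GL2a, sAl_comul]
      have h1 : (a ⊗ₜ[k] ((1 : H) ⊗ₜ[k] ((qh.counit u • qh.alpha) ⊗ₜ[k] v)))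
          = qh.counit u • (a ⊗ₜ[k] ((1 : H) ⊗ₜ[k] (qh.alpha ⊗ₜ[k] v))) := by
        simp only [TensorProduct.smul_tmul, TensorProduct.tmul_smul]
      rw [h1, smul_mul_assoc, map_smul, GL2b]
      rw [emid_tmul, epsH_tmul]
      have h2 : j14 (k := k) (H := H) (a ⊗ₜ (qh.counit u • v))
          = qh.counit u • (a ⊗ₜ[k] ((1 : H) ⊗ₜ[k] ((1 : H) ⊗ₜ[k] v))) := by
        rw [TensorProduct.tmul_smul, map_smul, j14_tmul]
      rw [h2, smul_mul_assoc, map_smul]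

lemma GL3 (t : H ⊗[k] (H ⊗[k] H)) :
    lamG qh (P5 (k := k) (H := H) t) = qa3l qh t ⊗ₜ 1 := by
  induction t using TensorProduct.induction_on with
  | zero => simp [lamG]
  | add x y hx hy => simp only [map_add, LinearMap.map_add, hx, hy, TensorProduct.add_tmul]
  | tmul a m =>
    induction m using TensorProduct.induction_on with
    | zero => simp [lamG]
    | add x y hx hy =>
      simp only [TensorProduct.tmul_add, map_add, LinearMap.map_add, hx, hy,
        TensorProduct.add_tmul]
    | tmul u v =>
      rw [P5_tmul]
      simp [lamG, Algebra.TensorProduct.assoc_tmul, lam4_tmul4, mul_assoc]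

lemma CBc (q : H) (E : H ⊗[k] (H ⊗[k] (H ⊗[k] H))) :
    lamG qh (((1 : H) ⊗ₜ ((1 : H) ⊗ₜ ((1 : H) ⊗ₜ q))) * E)
      = ((1 : H) ⊗ₜ q) * lamG qh E := by
  induction E using A4ind3 with
  | h0 => simp [lamG]
  | hadd x y hx hy => simp only [mul_add, map_add, hx, hy]
  | ht e1 e2 e3 e4 =>
    simp [lamG, Algebra.TensorProduct.tmul_mul_tmul, lam4_tmul4, mul_assoc]

lemma CB (m : H ⊗[k] H) (E : H ⊗[k] (H ⊗[k] (H ⊗[k] H))) :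
    lamG qh (P3 ((Algebra.TensorProduct.assoc k k k H H H)
        ((Algebra.TensorProduct.map qh.comul (AlgHom.id k H)) m)) * E)
      = ((1 : H) ⊗ₜ clps qh m) * lamG qh E := by
  induction m using TensorProduct.induction_on with
  | zero => simp [lamG]
  | add x y hx hy =>
    simp only [map_add, add_mul, LinearMap.map_add, hx, hy, TensorProduct.tmul_add]
  | tmul u v =>
    rw [P3_apply]
    simp only [Algebra.TensorProduct.map_tmul, AlgHom.coe_id, id_eq]
    rw [GL2a qh 1 (qh.comul u) v E, sAl_comul]
    have h1 : ((1 : H) ⊗ₜ[k] ((1 : H) ⊗ₜ[k] ((qh.counit u • qh.alpha) ⊗ₜ[k] v)))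
        = qh.counit u • ((1 : H) ⊗ₜ[k] ((1 : H) ⊗ₜ[k] (qh.alpha ⊗ₜ[k] v))) := by
      simp only [TensorProduct.smul_tmul, TensorProduct.tmul_smul]
    rw [h1, smul_mul_assoc, map_smul, GL2b qh 1 v E, CBc]
    rw [clps_tmul, TensorProduct.tmul_smul, smul_mul_assoc]

end GCollapse

end DrinfeldAux

namespace DrinfeldAux

variable {k : Type*} [Field k] {H : Type*} [Ring H] [Algebra k H]

set_option synthInstance.maxHeartbeats 400000

section Translate

variable (qh : QuasiHopf k H)

/-- `w`-map : `a ⊗ b ⊗ c ↦ (S(a)·α·b) ⊗ c`. -/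
noncomputable def wfun : (H ⊗[k] (H ⊗[k] H)) →ₗ[k] H ⊗[k] H :=
  LinearMap.rTensor H
      (LinearMap.mul' k H ∘ₗ
        TensorProduct.map (LinearMap.mulRight k qh.alpha ∘ₗ qh.antipode) LinearMap.id)
    ∘ₗ (TensorProduct.assoc k H H H).symm.toLinearMap

lemma drinfeldW_eq : drinfeldW qh = wfun qh qh.assocInv := rfl

@[simp] lemma wfun_tmul (a p q : H) :
    wfun qh (a ⊗ₜ (p ⊗ₜ q)) = (qh.antipode a * qh.alpha * p) ⊗ₜ q := by
  simp [wfun, TensorProduct.assoc_symm_tmul]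

/-- core of the inverse-aux map: `a ⊗ b ⊗ c ↦ (a·β·S(b)) ⊗ c`. -/
noncomputable def pcore : (H ⊗[k] (H ⊗[k] H)) →ₗ[k] H ⊗[k] H :=
  LinearMap.rTensor H
      (LinearMap.mul' k H ∘ₗ
        TensorProduct.map (LinearMap.mulRight k qh.beta) qh.antipode)
    ∘ₗ (TensorProduct.assoc k H H H).symm.toLinearMap

@[simp] lemma pcore_tmul (a p q : H) :
    pcore qh (a ⊗ₜ (p ⊗ₜ q)) = (a * qh.beta * qh.antipode p) ⊗ₜ q := by
  simp [pcore, TensorProduct.assoc_symm_tmul]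

/-- generalized inverse-aux map. -/
noncomputable def pfun (t : H ⊗[k] (H ⊗[k] H)) : H →ₗ[k] H ⊗[k] H :=
  pcore qh ∘ₗ LinearMap.mulRight k t ∘ₗ ((TensorProduct.mk k H (H ⊗[k] H)) 1)
    ∘ₗ qh.comul.toLinearMap

lemma drinfeldInvAux_eq : drinfeldInvAux qh = pfun qh qh.assoc := rfl

lemma pfun_apply (t : H ⊗[k] (H ⊗[k] H)) (h : H) :
    pfun qh t h = pcore qh (((1 : H) ⊗ₜ qh.comul h) * t) := rfl

lemma convIL (f : H →ₗ[k] H ⊗[k] H) (x y : H) :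
    LinearMap.mul' k (H ⊗[k] H) ((TensorProduct.map iL f) (x ⊗ₜ y))
      = (x ⊗ₜ (1 : H)) * f y := by
  simp

lemma IN1 (c t1 : H) (z : H ⊗[k] H) :
    (c ⊗ₜ (1 : H)) * pcore qh (t1 ⊗ₜ z)
      = ((c * t1) ⊗ₜ (1 : H)) * LinearMap.rTensor H (nB qh) z := by
  induction z using TensorProduct.induction_on with
  | zero => simp
  | add x y hx hy => simp only [TensorProduct.tmul_add, map_add, mul_add, hx, hy]
  | tmul p q =>
    simp [Algebra.TensorProduct.tmul_mul_tmul, mul_assoc]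

lemma A1 (s t : H ⊗[k] (H ⊗[k] H)) (d : H ⊗[k] H) :
    LinearMap.mul' k (H ⊗[k] H)
        ((TensorProduct.map iL (pfun qh t)) (wfun qh s * d))
      = lamF qh (P1 qh s * P3 ((LinearMap.lTensor H qh.comul.toLinearMap d) * t)) := by
  induction s using TensorProduct.induction_on with
  | zero => simp [lamF]
  | add x y hx hy =>
    simp only [map_add, add_mul, LinearMap.map_add, hx, hy, TensorProduct.tmul_add]
  | tmul s1 n =>
    induction n using TensorProduct.induction_on with
    | zero => simp [lamF]
    | add x y hx hy =>
      simp only [TensorProduct.tmul_add, map_add, add_mul, LinearMap.map_add, hx, hy]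
    | tmul p q =>
      induction d using TensorProduct.induction_on with
      | zero => simp [lamF]
      | add x y hx hy =>
        simp only [map_add, mul_add, add_mul, LinearMap.map_add, hx, hy]
      | tmul g u =>
        rw [wfun_tmul, Algebra.TensorProduct.tmul_mul_tmul, convIL]
        rw [pfun_apply]
        induction t using TensorProduct.induction_on with
        | zero => simp [lamF]
        | add x y hx hy =>
          simp only [mul_add, map_add, LinearMap.map_add, hx, hy]
        | tmul t1 m =>
          induction m using TensorProduct.induction_on with
          | zero => simp [lamF]
          | add x y hx hy =>
            simp only [TensorProduct.tmul_add, mul_add, map_add, LinearMap.map_add,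
              hx, hy]
          | tmul t2 t3 =>
            have hqu : qh.comul (q * u) = qh.comul q * qh.comul u := map_mul _ _ _
            rw [hqu, Algebra.TensorProduct.tmul_mul_tmul, one_mul, IN1]
            -- RHS
            rw [P1_tmul]
            simp only [Algebra.TensorProduct.map_tmul, AlgHom.coe_id, id_eq,
              LinearMap.lTensor_tmul, AlgHom.toLinearMap_apply]
            rw [Algebra.TensorProduct.tmul_mul_tmul, P3_apply,
              Algebra.TensorProduct.tmul_mul_tmul]
            simp only [lamF, lam4_tmul, one_mul]
            simp [mul_assoc]
  
lemma B1 (s t : H ⊗[k] (H ⊗[k] H)) (d : H ⊗[k] H) :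
    LinearMap.mul' k (H ⊗[k] H)
        ((TensorProduct.map iL (LinearMap.mulLeft k (wfun qh s) ∘ₗ qh.comul.toLinearMap))
          (pcore qh (((1 : H) ⊗ₜ d) * t)))
      = lamG qh (P3 (s * (LinearMap.lTensor H qh.comul.toLinearMap d)) * P1 qh t) := by
  induction d using TensorProduct.induction_on with
  | zero => simp [lamG]
  | add x y hx hy =>
    simp only [TensorProduct.tmul_add, add_mul, mul_add, map_add, LinearMap.map_add,
      hx, hy]
  | tmul a b =>
    induction t using TensorProduct.induction_on with
    | zero => simp [lamG]
    | add x y hx hy =>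
      simp only [mul_add, map_add, LinearMap.map_add, hx, hy]
    | tmul t1 m =>
      induction m using TensorProduct.induction_on with
      | zero => simp [lamG]
      | add x y hx hy =>
        simp only [TensorProduct.tmul_add, mul_add, map_add, LinearMap.map_add,
          hx, hy]
      | tmul t2 t3 =>
        rw [Algebra.TensorProduct.tmul_mul_tmul, one_mul,
          Algebra.TensorProduct.tmul_mul_tmul, pcore_tmul, convIL]
        simp only [LinearMap.coe_comp, Function.comp_apply, AlgHom.toLinearMap_apply,
          LinearMap.mulLeft_apply, map_mul]
        induction s using TensorProduct.induction_on with
        | zero => simp [lamG]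
        | add x y hx hy =>
          simp only [map_add, add_mul, mul_add, LinearMap.map_add, hx, hy,
            TensorProduct.add_tmul]
        | tmul s1 n =>
          induction n using TensorProduct.induction_on with
          | zero => simp [lamG]
          | add x y hx hy =>
            simp only [TensorProduct.tmul_add, map_add, add_mul, mul_add,
              LinearMap.map_add, hx, hy]
          | tmul p q =>
            rw [wfun_tmul]
            -- RHS
            simp only [LinearMap.lTensor_tmul, AlgHom.toLinearMap_apply, P3_apply,
              P1_tmul, Algebra.TensorProduct.map_tmul, AlgHom.coe_id, id_eq]
            simp only [Algebra.TensorProduct.tmul_mul_tmul, one_mul, mul_one]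
            simp only [lamG, lam4_tmul, LinearMap.rTensor_id, LinearMap.id_coe, id_eq]
            simp only [← mul_assoc]
            simp only [Algebra.TensorProduct.tmul_mul_tmul, one_mul, mul_one]
            simp [S_mul, mul_assoc]

end Translate

end DrinfeldAux

namespace DrinfeldAux

variable {k : Type*} [Field k] {H : Type*} [Ring H] [Algebra k H]

set_option synthInstance.maxHeartbeats 400000

section Main

variable (qh : QuasiHopf k H)

lemma algInvR {B : Type*} [Ring B] [Algebra k B] (F : (H ⊗[k] (H ⊗[k] H)) →ₐ[k] B) :
    F qh.assoc * F qh.assocInv = 1 := by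
  rw [← map_mul, qh.assoc_mul_inv, map_one]

lemma algInvL {B : Type*} [Ring B] [Algebra k B] (F : (H ⊗[k] (H ⊗[k] H)) →ₐ[k] B) :
    F qh.assocInv * F qh.assoc = 1 := by
  rw [← map_mul, qh.inv_mul_assoc, map_one]

lemma pentA :
    P1 qh qh.assocInv * P3 qh.assoc
      = P2 qh qh.assoc * (P5 (k := k) (H := H) qh.assocInv * P4 qh qh.assocInv) := by
  have e1 : P2 qh qh.assoc
      = P1 qh qh.assocInv * (P3 qh.assoc * P4 qh qh.assoc * P5 (k := k) (H := H) qh.assoc) := by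
    have h := congrArg (fun x => P1 qh qh.assocInv * x) (pent5 qh)
    rw [← mul_assoc, algInvL qh (P1 qh), one_mul] at h
    exact h
  rw [e1]
  simp only [mul_assoc]
  rw [show P5 (k := k) (H := H) qh.assoc *
        (P5 (k := k) (H := H) qh.assocInv * P4 qh qh.assocInv) = P4 qh qh.assocInv from by
      rw [← mul_assoc, algInvR qh (P5 (k := k) (H := H)), one_mul]]
  rw [algInvR qh (P4 qh), mul_one]

lemma pentB :
    P3 qh.assocInv * P1 qh qh.assoc
      = P4 qh qh.assoc * (P5 (k := k) (H := H) qh.assoc * P2 qh qh.assocInv) := by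
  have e1 : P3 qh.assocInv * (P1 qh qh.assoc * P2 qh qh.assoc)
      = P4 qh qh.assoc * P5 (k := k) (H := H) qh.assoc := by
    have h := congrArg (fun x => P3 (k := k) (H := H) qh.assocInv * x) (pent5 qh)
    rw [h, mul_assoc, ← mul_assoc (P3 (k := k) (H := H) qh.assocInv),
      algInvL qh (P3 (k := k) (H := H)), one_mul]
  calc P3 qh.assocInv * P1 qh qh.assoc
      = P3 qh.assocInv * (P1 qh qh.assoc * (P2 qh qh.assoc * P2 qh qh.assocInv)) := by
        rw [algInvR qh (P2 qh), mul_one]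
    _ = (P3 qh.assocInv * (P1 qh qh.assoc * P2 qh qh.assoc)) * P2 qh qh.assocInv := by
        simp only [mul_assoc]
    _ = (P4 qh qh.assoc * P5 (k := k) (H := H) qh.assoc) * P2 qh qh.assocInv := by
        rw [e1]
    _ = P4 qh qh.assoc * (P5 (k := k) (H := H) qh.assoc * P2 qh qh.assocInv) := by
        rw [mul_assoc]

lemma bridge (x : H ⊗[k] H) :
    (LinearMap.lTensor H qh.comul.toLinearMap) x
      = (Algebra.TensorProduct.map (AlgHom.id k H) qh.comul) x := by
  induction x using TensorProduct.induction_on with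
  | zero => simp
  | tmul a b => simp
  | add x y hx hy => simp [map_add, hx, hy]

lemma mainA (h : H) :
    LinearMap.mul' k (H ⊗[k] H) ((TensorProduct.map iL (drinfeldInvAux qh))
      (drinfeldW qh * qh.comul h)) = 1 ⊗ₜ h := by
  rw [drinfeldW_eq, drinfeldInvAux_eq, A1, bridge, qh.quasi_coassoc h]
  have e : P3 (k := k) (H := H) (qh.assoc *
      (Algebra.TensorProduct.assoc k k k H H H)
        ((Algebra.TensorProduct.map qh.comul (AlgHom.id k H)) (qh.comul h)))
      = P3 qh.assoc * P3 ((Algebra.TensorProduct.assoc k k k H H H)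
        ((Algebra.TensorProduct.map qh.comul (AlgHom.id k H)) (qh.comul h))) :=
    map_mul _ _ _
  rw [e, ← mul_assoc, CA, clps_comul, pentA, AL1, epsA_phi, map_one, one_mul,
    AL2, emid_phiInv, map_one, mul_one, AL3, qa4l_phiInv]
  simp [Algebra.TensorProduct.tmul_mul_tmul]

lemma mainB (h : H) :
    LinearMap.mul' k (H ⊗[k] H) ((TensorProduct.map iL
        (LinearMap.mulLeft k (drinfeldW qh) ∘ₗ qh.comul.toLinearMap))
      (drinfeldInvAux qh h)) = 1 ⊗ₜ h := by
  rw [drinfeldW_eq, drinfeldInvAux_eq, pfun_apply, B1, bridge]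
  have hco : qh.assocInv * (Algebra.TensorProduct.map (AlgHom.id k H) qh.comul)
        (qh.comul h)
      = (Algebra.TensorProduct.assoc k k k H H H)
          ((Algebra.TensorProduct.map qh.comul (AlgHom.id k H)) (qh.comul h))
        * qh.assocInv := by
    have h1 := qh.quasi_coassoc h
    calc qh.assocInv * (Algebra.TensorProduct.map (AlgHom.id k H) qh.comul) (qh.comul h)
        = qh.assocInv * (Algebra.TensorProduct.map (AlgHom.id k H) qh.comul) (qh.comul h)
            * (qh.assoc * qh.assocInv) := by rw [qh.assoc_mul_inv, mul_one]
      _ = qh.assocInv * ((Algebra.TensorProduct.map (AlgHom.id k H) qh.comul) (qh.comul h)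
            * qh.assoc) * qh.assocInv := by simp only [mul_assoc]
      _ = qh.assocInv * (qh.assoc * ((Algebra.TensorProduct.assoc k k k H H H)
            ((Algebra.TensorProduct.map qh.comul (AlgHom.id k H)) (qh.comul h)))
              * qh.assocInv) := by rw [h1]; simp only [mul_assoc]
      _ = (qh.assocInv * qh.assoc) * ((Algebra.TensorProduct.assoc k k k H H H)
            ((Algebra.TensorProduct.map qh.comul (AlgHom.id k H)) (qh.comul h))
              * qh.assocInv) := by simp only [mul_assoc]
      _ = _ := by rw [qh.inv_mul_assoc, one_mul]
  rw [hco]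
  have e : P3 (k := k) (H := H) ((Algebra.TensorProduct.assoc k k k H H H)
        ((Algebra.TensorProduct.map qh.comul (AlgHom.id k H)) (qh.comul h))
        * qh.assocInv)
      = P3 ((Algebra.TensorProduct.assoc k k k H H H)
        ((Algebra.TensorProduct.map qh.comul (AlgHom.id k H)) (qh.comul h)))
        * P3 qh.assocInv := map_mul _ _ _
  rw [e, mul_assoc, CB, clps_comul, pentB, GL2, emid_phi, map_one, one_mul,
    GL1, epsA_phiInv, map_one, mul_one, GL3, qa3l_phi]
  simp [Algebra.TensorProduct.tmul_mul_tmul]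

/-- tmap structure of the canonical maps. -/
noncomputable def tmap (f : H →ₗ[k] H ⊗[k] H) : H ⊗[k] H →ₗ[k] H ⊗[k] H :=
  LinearMap.rTensor H (LinearMap.mul' k H)
    ∘ₗ (TensorProduct.assoc k H H H).symm.toLinearMap
    ∘ₗ LinearMap.lTensor H f

lemma drinfeldCan_eq :
    drinfeldCan qh = tmap (LinearMap.mulLeft k (drinfeldW qh) ∘ₗ qh.comul.toLinearMap) :=
  rfl

lemma drinfeldCanInv_eq : drinfeldCanInv qh = tmap (drinfeldInvAux qh) := rfl

lemma tmap_tmul (f : H →ₗ[k] H ⊗[k] H) (g h : H) :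
    tmap f (g ⊗ₜ h) = (g ⊗ₜ (1 : H)) * f h := by
  have key : ∀ z : H ⊗[k] H,
      LinearMap.rTensor H (LinearMap.mul' k H)
        ((TensorProduct.assoc k H H H).symm (g ⊗ₜ z)) = (g ⊗ₜ (1 : H)) * z := by
    intro z
    induction z using TensorProduct.induction_on with
    | zero => simp
    | tmul p q =>
      simp [TensorProduct.assoc_symm_tmul, Algebra.TensorProduct.tmul_mul_tmul]
    | add x y hx hy => simp only [TensorProduct.tmul_add, map_add, mul_add, hx, hy]
  simp only [tmap, LinearMap.coe_comp, Function.comp_apply, LinearMap.lTensor_tmul,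
    LinearEquiv.coe_coe]
  exact key (f h)

lemma tmap_lmul (f : H →ₗ[k] H ⊗[k] H) (g : H) (z : H ⊗[k] H) :
    tmap f ((g ⊗ₜ (1 : H)) * z) = (g ⊗ₜ (1 : H)) * tmap f z := by
  induction z using TensorProduct.induction_on with
  | zero => simp
  | tmul p q =>
    rw [Algebra.TensorProduct.tmul_mul_tmul, one_mul, tmap_tmul, tmap_tmul,
      ← mul_assoc, Algebra.TensorProduct.tmul_mul_tmul, one_mul]
  | add x y hx hy => simp only [mul_add, map_add, hx, hy]

lemma tmap_conv (f : H →ₗ[k] H ⊗[k] H) (z : H ⊗[k] H) :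
    tmap f z = LinearMap.mul' k (H ⊗[k] H) ((TensorProduct.map iL f) z) := by
  induction z using TensorProduct.induction_on with
  | zero => simp
  | tmul p q => rw [tmap_tmul, convIL]
  | add x y hx hy => simp only [map_add, hx, hy]

lemma comp_eval (f g : H →ₗ[k] H ⊗[k] H)
    (hyp : ∀ h : H, LinearMap.mul' k (H ⊗[k] H) ((TensorProduct.map iL g) (f h))
      = 1 ⊗ₜ h) :
    ∀ x, tmap g (tmap f x) = x := by
  intro x
  induction x using TensorProduct.induction_on with
  | zero => simp
  | tmul a b =>
    rw [tmap_tmul, tmap_lmul, tmap_conv, hyp, Algebra.TensorProduct.tmul_mul_tmul,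
      one_mul, mul_one]
  | add x y hx hy => simp only [map_add, hx, hy]

lemma leftInv : ∀ x, drinfeldCanInv qh (drinfeldCan qh x) = x := by
  rw [drinfeldCan_eq, drinfeldCanInv_eq]
  refine comp_eval _ _ (fun h => ?_)
  have : (LinearMap.mulLeft k (drinfeldW qh) ∘ₗ qh.comul.toLinearMap) h
      = drinfeldW qh * qh.comul h := rfl
  rw [this]
  exact mainA qh h

lemma rightInv : ∀ x, drinfeldCan qh (drinfeldCanInv qh x) = x := by
  rw [drinfeldCan_eq, drinfeldCanInv_eq]
  exact comp_eval _ _ (fun h => mainB qh h)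

end Main

end DrinfeldAux

/-- Drinfeld's canonical map is bijective, with the stated inverse. -/
theorem drinfeldCan_bijective (qh : QuasiHopf k H) :
    Function.Bijective (drinfeldCan qh) ∧
      drinfeldCanInv qh ∘ₗ drinfeldCan qh = LinearMap.id ∧
      drinfeldCan qh ∘ₗ drinfeldCanInv qh = LinearMap.id := by
  refine ⟨⟨?_, ?_⟩, ?_, ?_⟩
  · exact Function.LeftInverse.injective (g := drinfeldCanInv qh) (DrinfeldAux.leftInv qh)
  · exact Function.RightInverse.surjective (g := drinfeldCanInv qh)
      (DrinfeldAux.rightInv qh)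
  · exact LinearMap.ext (DrinfeldAux.leftInv qh)
  · exact LinearMap.ext (DrinfeldAux.rightInv qh)
end

section
/- Let (H, φ, S, α, β) be a quasi-Hopf algebra and K ⊆ H a finite-dimensional subquasibialgebra (i.e., a subalgebra with Δ(K) ⊆ K⊗K and φ ∈ K⊗K⊗K) satisfying S(φ⁻¹⁽¹⁾)·α·φ⁻¹⁽²⁾ ⊗ φ⁻¹⁽³⁾ ∈ K⊗K. Then S(K) ⊆ K and α, β ∈ K, so K is a quasi-Hopf subalgebra of H. -/
open TensorProduct LinearMap

variable {k : Type*} [Field k] {H : Type*} [Ring H] [Algebra k H]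

set_option synthInstance.maxHeartbeats 800000
set_option maxHeartbeats 1600000

section Infrastructure

theorem rep2 (t : H ⊗[k] H) : ∃ (n : ℕ) (a b : Fin n → H), t = ∑ i, a i ⊗ₜ[k] b i := by
  induction t using TensorProduct.induction_on with
  | zero => exact ⟨0, ![], ![], by simp⟩
  | tmul a b => exact ⟨1, fun _ => a, fun _ => b, by simp⟩
  | add x y hx hy =>
    obtain ⟨n, a, b, rfl⟩ := hx
    obtain ⟨m, c, d, rfl⟩ := hy
    exact ⟨n + m, Fin.append a c, Fin.append b d, by
      simp [Fin.sum_univ_add, Fin.append_left, Fin.append_right]⟩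

theorem rep3 (t : H ⊗[k] (H ⊗[k] H)) :
    ∃ (n : ℕ) (a b c : Fin n → H), t = ∑ i, a i ⊗ₜ[k] (b i ⊗ₜ[k] c i) := by
  induction t using TensorProduct.induction_on with
  | zero => exact ⟨0, ![], ![], ![], by simp⟩
  | tmul a t =>
    obtain ⟨n, b, c, rfl⟩ := rep2 t
    exact ⟨n, fun _ => a, b, c, by rw [tmul_sum]⟩
  | add x y hx hy =>
    obtain ⟨n, a, b, c, rfl⟩ := hx
    obtain ⟨m, a', b', c', rfl⟩ := hy
    exact ⟨n + m, Fin.append a a', Fin.append b b', Fin.append c c', by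
      simp [Fin.sum_univ_add, Fin.append_left, Fin.append_right]⟩

variable (qh : QuasiHopf k H)

/-- counit axiom, right, in sum form -/
theorem csum_r {h : H} {n : ℕ} {a b : Fin n → H}
    (hrep : qh.comul h = ∑ i, a i ⊗ₜ[k] b i) :
    ∑ i, qh.counit (b i) • a i = h := by
  have := qh.counit_comul_right h
  rw [hrep] at this
  simpa [map_sum, rid_tmul] using this

theorem csum_l {h : H} {n : ℕ} {a b : Fin n → H}
    (hrep : qh.comul h = ∑ i, a i ⊗ₜ[k] b i) :
    ∑ i, qh.counit (a i) • b i = h := by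
  have := qh.counit_comul_left h
  rw [hrep] at this
  simpa [map_sum, lid_tmul] using this

theorem asum_l {h : H} {n : ℕ} {a b : Fin n → H}
    (hrep : qh.comul h = ∑ i, a i ⊗ₜ[k] b i) :
    ∑ i, qh.antipode (a i) * qh.alpha * b i = qh.counit h • qh.alpha := by
  have := qh.isQuasiAntipode.antipode_left h
  rw [hrep] at this
  simpa [map_sum] using this

theorem asum_r {h : H} {n : ℕ} {a b : Fin n → H}
    (hrep : qh.comul h = ∑ i, a i ⊗ₜ[k] b i) :
    ∑ i, a i * (qh.beta * qh.antipode (b i)) = qh.counit h • qh.beta := by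
  have := qh.isQuasiAntipode.antipode_right h
  rw [hrep] at this
  simpa [map_sum] using this

theorem phi'_contract {n : ℕ} {x y z : Fin n → H}
    (hrep : qh.assocInv = ∑ i, x i ⊗ₜ[k] (y i ⊗ₜ[k] z i)) :
    ∑ i, qh.antipode (x i) * qh.alpha * (y i * qh.beta * qh.antipode (z i)) = 1 := by
  have := qh.isQuasiAntipode.assocInv_antipode
  rw [hrep] at this
  simpa [map_sum] using this

end Infrastructure

section CounitTools

variable (qh : QuasiHopf k H)

/-- counit on both factors -/
noncomputable def c2 : (H ⊗[k] H) →ₐ[k] k :=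
  Algebra.TensorProduct.lift qh.counit qh.counit fun _ _ => Commute.all _ _

@[simp] theorem c2_tmul (a b : H) : c2 qh (a ⊗ₜ[k] b) = qh.counit a * qh.counit b := by
  simp [c2]

theorem c2_comul (a : H) : c2 qh (qh.comul a) = qh.counit a := by
  obtain ⟨n, p, q, hrep⟩ := rep2 (qh.comul a)
  have h1 := congrArg qh.counit (csum_r qh hrep)
  rw [map_sum] at h1
  rw [hrep, map_sum]
  simpa [mul_comm] using h1

/-- kill the first tensor factor -/
noncomputable def kill1 (B : Type*) [Ring B] [Algebra k B] : (H ⊗[k] B) →ₐ[k] B :=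
  (Algebra.TensorProduct.lid k B).toAlgHom.comp
    (Algebra.TensorProduct.map qh.counit (AlgHom.id k B))

@[simp] theorem kill1_tmul (B : Type*) [Ring B] [Algebra k B] (a : H) (x : B) :
    kill1 qh B (a ⊗ₜ[k] x) = qh.counit a • x := by
  simp [kill1]

/-- kill the last two factors of `H ⊗ (H ⊗ H)` -/
noncomputable def kill23 : (H ⊗[k] (H ⊗[k] H)) →ₐ[k] H :=
  (Algebra.TensorProduct.rid k k H).toAlgHom.comp
    (Algebra.TensorProduct.map (AlgHom.id k H) (c2 qh))

@[simp] theorem kill23_tmul (a : H) (t : H ⊗[k] H) :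
    kill23 qh (a ⊗ₜ[k] t) = c2 qh t • a := by
  simp [kill23, Algebra.TensorProduct.rid_tmul]

/-- counit on the first two factors of `H ⊗ (H ⊗ (H ⊗ H))` -/
noncomputable def eps12 : (H ⊗[k] (H ⊗[k] (H ⊗[k] H))) →ₐ[k] H ⊗[k] H :=
  (kill1 qh (H ⊗[k] H)).comp (kill1 qh (H ⊗[k] (H ⊗[k] H)))

@[simp] theorem eps12_tmul (a b : H) (t : H ⊗[k] H) :
    eps12 qh (a ⊗ₜ[k] (b ⊗ₜ[k] t)) = (qh.counit a * qh.counit b) • t := by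
  rw [eps12, AlgHom.comp_apply, kill1_tmul, map_smul, kill1_tmul, smul_smul]

/-- counit on the last two factors of `H ⊗ (H ⊗ (H ⊗ H))` -/
noncomputable def eps34 : (H ⊗[k] (H ⊗[k] (H ⊗[k] H))) →ₐ[k] H ⊗[k] H :=
  Algebra.TensorProduct.map (AlgHom.id k H) (kill23 qh)

@[simp] theorem eps34_tmul (a b : H) (t : H ⊗[k] H) :
    eps34 qh (a ⊗ₜ[k] (b ⊗ₜ[k] t)) = a ⊗ₜ[k] (c2 qh t • b) := by
  simp [eps34]

theorem eps12_assoc (s t : H ⊗[k] H) :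
    eps12 qh ((Algebra.TensorProduct.assoc k k k H H (H ⊗[k] H)) (s ⊗ₜ[k] t)) = c2 qh s • t := by
  induction s using TensorProduct.induction_on with
  | zero => rw [zero_tmul, map_zero, map_zero, map_zero, zero_smul]
  | tmul p q => rw [Algebra.TensorProduct.assoc_tmul, eps12_tmul, c2_tmul]
  | add x y hx hy =>
    rw [add_tmul, map_add, map_add, hx, hy, map_add, add_smul]

theorem eps34_assoc (s t : H ⊗[k] H) :
    eps34 qh ((Algebra.TensorProduct.assoc k k k H H (H ⊗[k] H)) (s ⊗ₜ[k] t)) = c2 qh t • s := by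
  induction s using TensorProduct.induction_on with
  | zero => rw [zero_tmul, map_zero, map_zero, smul_zero]
  | tmul p q =>
    rw [Algebra.TensorProduct.assoc_tmul, eps34_tmul, tmul_smul, smul_tmul']
  | add x y hx hy =>
    rw [add_tmul, map_add, map_add, hx, hy, smul_add]

theorem kill1_assoc (s : H ⊗[k] H) (c : H) :
    kill1 qh (H ⊗[k] H) ((Algebra.TensorProduct.assoc k k k H H H) (s ⊗ₜ[k] c))
      = (TensorProduct.lid k H) ((LinearMap.rTensor H qh.counit.toLinearMap) s) ⊗ₜ[k] c := by
  induction s using TensorProduct.induction_on with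
  | zero => rw [zero_tmul, map_zero, map_zero _, map_zero, map_zero, zero_tmul]
  | tmul p q =>
    rw [Algebra.TensorProduct.assoc_tmul, kill1_tmul, rTensor_tmul, lid_tmul, smul_tmul']
    rfl
  | add x y hx hy =>
    rw [add_tmul, map_add, map_add, hx, hy, map_add, map_add, add_tmul]

theorem kill23_assoc (s : H ⊗[k] H) (c : H) :
    kill23 qh ((Algebra.TensorProduct.assoc k k k H H H) (s ⊗ₜ[k] c))
      = qh.counit c • (TensorProduct.rid k H) ((LinearMap.lTensor H qh.counit.toLinearMap) s) := by
  induction s using TensorProduct.induction_on with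
  | zero => rw [zero_tmul, map_zero, map_zero _, map_zero, map_zero, smul_zero]
  | tmul p q =>
    rw [Algebra.TensorProduct.assoc_tmul, kill23_tmul, c2_tmul, lTensor_tmul, rid_tmul,
      smul_smul, mul_comm]
    rfl
  | add x y hx hy =>
    rw [add_tmul, map_add, map_add, hx, hy, map_add, map_add, smul_add]

end CounitTools

section MidCounit

variable (qh : QuasiHopf k H)

theorem algHom_image_one {A B : Type*} [Ring A] [Ring B] [Algebra k A] [Algebra k B]
    (F : A →ₐ[k] B) {x y : A} (h1 : x * y = 1) (h2 : F x = 1) : F y = 1 := by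
  have h := congrArg F h1
  rw [map_mul, h2, one_mul, map_one] at h
  exact h

theorem mid_sum {n : ℕ} {a b c : Fin n → H}
    (hrep : qh.assoc = ∑ i, a i ⊗ₜ[k] (b i ⊗ₜ[k] c i)) :
    ∑ i, qh.counit (b i) • (a i ⊗ₜ[k] c i) = (1 : H ⊗[k] H) := by
  have h := qh.counit_mid
  rw [hrep, map_sum] at h
  simpa [Algebra.TensorProduct.lid_tmul] using h

theorem counit_mid_inv :
    (Algebra.TensorProduct.map (AlgHom.id k H)
        ((Algebra.TensorProduct.lid k H).toAlgHom.comp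
          (Algebra.TensorProduct.map qh.counit (AlgHom.id k H)))) qh.assocInv = 1 :=
  algHom_image_one _ qh.assoc_mul_inv qh.counit_mid

theorem mid_sum' {n : ℕ} {x y z : Fin n → H}
    (hrep : qh.assocInv = ∑ i, x i ⊗ₜ[k] (y i ⊗ₜ[k] z i)) :
    ∑ i, qh.counit (y i) • (x i ⊗ₜ[k] z i) = (1 : H ⊗[k] H) := by
  have h := counit_mid_inv qh
  rw [hrep, map_sum] at h
  simpa [Algebra.TensorProduct.lid_tmul] using h

theorem dsum {n : ℕ} {a b c : Fin n → H}
    (hrep : qh.assoc = ∑ i, a i ⊗ₜ[k] (b i ⊗ₜ[k] c i)) :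
    ∑ i, qh.counit (b i) • qh.counit (a i) • c i = 1 := by
  have h := congrArg
    (fun t => (TensorProduct.lid k H) ((LinearMap.rTensor H qh.counit.toLinearMap) t))
    (mid_sum qh hrep)
  rw [Algebra.TensorProduct.one_def] at h
  simpa [map_sum, lid_tmul] using h

theorem esum {n : ℕ} {a b c : Fin n → H}
    (hrep : qh.assoc = ∑ i, a i ⊗ₜ[k] (b i ⊗ₜ[k] c i)) :
    ∑ i, qh.counit (b i) • qh.counit (c i) • a i = 1 := by
  have h := congrArg
    (fun t => (TensorProduct.rid k H) ((LinearMap.lTensor H qh.counit.toLinearMap) t))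
    (mid_sum qh hrep)
  rw [Algebra.TensorProduct.one_def] at h
  simpa [map_sum, rid_tmul] using h

end MidCounit

section UV

variable (qh : QuasiHopf k H)

noncomputable def Ucan : (H ⊗[k] (H ⊗[k] H)) →ₐ[k] H ⊗[k] H :=
  (eps12 qh).comp ((Algebra.TensorProduct.assoc k k k H H (H ⊗[k] H)).toAlgHom.comp
    (Algebra.TensorProduct.map qh.comul (AlgHom.id k (H ⊗[k] H))))

noncomputable def Vcan : (H ⊗[k] (H ⊗[k] H)) →ₐ[k] H ⊗[k] H :=
  (eps34 qh).comp (Algebra.TensorProduct.map (AlgHom.id k H)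
    (Algebra.TensorProduct.map (AlgHom.id k H) qh.comul))

theorem Ucan_eval {n : ℕ} {a b c : Fin n → H} {t : H ⊗[k] (H ⊗[k] H)}
    (hrep : t = ∑ i, a i ⊗ₜ[k] (b i ⊗ₜ[k] c i)) :
    Ucan qh t = ∑ i, qh.counit (a i) • (b i ⊗ₜ[k] c i) := by
  rw [hrep, Ucan]
  simp only [AlgHom.comp_apply, map_sum, Algebra.TensorProduct.map_tmul,
    AlgHom.coe_id, id_eq, AlgEquiv.toAlgHom_eq_coe, AlgHom.coe_coe, AlgEquiv.coe_toAlgHom]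
  refine Finset.sum_congr rfl fun i _ => ?_
  rw [eps12_assoc, c2_comul]

theorem Vcan_eval {n : ℕ} {a b c : Fin n → H} {t : H ⊗[k] (H ⊗[k] H)}
    (hrep : t = ∑ i, a i ⊗ₜ[k] (b i ⊗ₜ[k] c i)) :
    Vcan qh t = ∑ i, qh.counit (c i) • (a i ⊗ₜ[k] b i) := by
  rw [hrep, Vcan]
  simp only [AlgHom.comp_apply, map_sum, Algebra.TensorProduct.map_tmul,
    AlgHom.coe_id, id_eq]
  refine Finset.sum_congr rfl fun i _ => ?_
  rw [eps34_tmul, c2_comul, tmul_smul]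

theorem usum {n : ℕ} {a b c : Fin n → H}
    (hrep : qh.assoc = ∑ i, a i ⊗ₜ[k] (b i ⊗ₜ[k] c i)) :
    ∑ i, qh.counit (a i) • (b i ⊗ₜ[k] c i) = (1 : H ⊗[k] H) := by
  have husum : Ucan qh qh.assoc = ∑ i, qh.counit (a i) • (b i ⊗ₜ[k] c i) := Ucan_eval qh hrep
  set u : H ⊗[k] H := ∑ i, qh.counit (a i) • (b i ⊗ₜ[k] c i) with hu
  have h := congrArg (eps12 qh) qh.pentagon
  rw [map_mul, map_mul, map_mul] at h
  have e1 : eps12 qh ((Algebra.TensorProduct.map (AlgHom.id k H)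
      (Algebra.TensorProduct.map (AlgHom.id k H) qh.comul)) qh.assoc) = 1 := by
    rw [hrep, map_sum, map_sum]
    calc ∑ i, eps12 qh ((Algebra.TensorProduct.map (AlgHom.id k H)
          (Algebra.TensorProduct.map (AlgHom.id k H) qh.comul)) (a i ⊗ₜ[k] (b i ⊗ₜ[k] c i)))
        = qh.comul (∑ i, qh.counit (b i) • qh.counit (a i) • c i) := by
          rw [map_sum qh.comul (fun i => qh.counit (b i) • qh.counit (a i) • c i) Finset.univ]
          refine Finset.sum_congr rfl fun i _ => ?_
          rw [Algebra.TensorProduct.map_tmul, Algebra.TensorProduct.map_tmul, eps12_tmul,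
            map_smul, map_smul]
          simp [smul_smul, mul_comm]
      _ = 1 := by rw [dsum qh hrep, map_one]
  have e2 : eps12 qh ((Algebra.TensorProduct.assoc k k k H H (H ⊗[k] H))
      ((Algebra.TensorProduct.map qh.comul (AlgHom.id k (H ⊗[k] H))) qh.assoc)) = u := husum
  have e3 : eps12 qh ((1 : H) ⊗ₜ[k] qh.assoc) = u := by
    rw [hrep, tmul_sum, map_sum]
    refine Finset.sum_congr rfl fun i _ => ?_
    rw [eps12_tmul, map_one, one_mul]
  have e4 : eps12 qh ((Algebra.TensorProduct.map (AlgHom.id k H)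
      ((Algebra.TensorProduct.assoc k k k H H H).toAlgHom.comp
        (Algebra.TensorProduct.map qh.comul (AlgHom.id k H)))) qh.assoc) = u := by
    rw [hrep]
    simp only [map_sum]
    refine Finset.sum_congr rfl fun i _ => ?_
    rw [Algebra.TensorProduct.map_tmul]
    simp only [AlgHom.coe_id, id_eq, AlgHom.comp_apply, Algebra.TensorProduct.map_tmul,
      AlgEquiv.toAlgHom_eq_coe, AlgHom.coe_coe, AlgEquiv.coe_toAlgHom]
    rw [eps12, AlgHom.comp_apply, kill1_tmul, map_smul, kill1_assoc,
      qh.counit_comul_left]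
  have e5 : eps12 qh ((Algebra.TensorProduct.map (AlgHom.id k H)
      (Algebra.TensorProduct.assoc k k k H H H).toAlgHom)
      ((Algebra.TensorProduct.assoc k k k H (H ⊗[k] H) H) (qh.assoc ⊗ₜ[k] (1 : H)))) = 1 := by
    rw [hrep, sum_tmul, map_sum, map_sum, map_sum]
    calc ∑ i, eps12 qh ((Algebra.TensorProduct.map (AlgHom.id k H)
          (Algebra.TensorProduct.assoc k k k H H H).toAlgHom)
          ((Algebra.TensorProduct.assoc k k k H (H ⊗[k] H) H)
            ((a i ⊗ₜ[k] (b i ⊗ₜ[k] c i)) ⊗ₜ[k] (1 : H))))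
        = (∑ i, qh.counit (b i) • qh.counit (a i) • c i) ⊗ₜ[k] (1 : H) := by
          rw [sum_tmul]
          refine Finset.sum_congr rfl fun i _ => ?_
          rw [Algebra.TensorProduct.assoc_tmul, Algebra.TensorProduct.map_tmul]
          simp only [AlgHom.coe_id, id_eq, AlgEquiv.toAlgHom_eq_coe, AlgHom.coe_coe, AlgEquiv.coe_toAlgHom]
          rw [Algebra.TensorProduct.assoc_tmul, eps12_tmul, smul_tmul',
            smul_smul, mul_comm (qh.counit (a i)) (qh.counit (b i))]
      _ = 1 := by rw [dsum qh hrep, Algebra.TensorProduct.one_def]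
  rw [e1, e2, e3, e4, e5, one_mul, mul_one] at h
  -- h : u = u * u
  have hUinv : Ucan qh qh.assocInv * u = 1 := by
    rw [← husum, ← map_mul, qh.inv_mul_assoc, map_one]
  have h2 : Ucan qh qh.assocInv * (u * u) = Ucan qh qh.assocInv * u := by rw [← h]
  rw [← mul_assoc, hUinv, one_mul] at h2
  exact h2
end UV

section UV2

variable (qh : QuasiHopf k H)

theorem vsum {n : ℕ} {a b c : Fin n → H}
    (hrep : qh.assoc = ∑ i, a i ⊗ₜ[k] (b i ⊗ₜ[k] c i)) :
    ∑ i, qh.counit (c i) • (a i ⊗ₜ[k] b i) = (1 : H ⊗[k] H) := by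
  have hvsum : Vcan qh qh.assoc = ∑ i, qh.counit (c i) • (a i ⊗ₜ[k] b i) := Vcan_eval qh hrep
  set v : H ⊗[k] H := ∑ i, qh.counit (c i) • (a i ⊗ₜ[k] b i) with hv
  have h := congrArg (eps34 qh) qh.pentagon
  rw [map_mul, map_mul, map_mul] at h
  have e1 : eps34 qh ((Algebra.TensorProduct.map (AlgHom.id k H)
      (Algebra.TensorProduct.map (AlgHom.id k H) qh.comul)) qh.assoc) = v := hvsum
  have e2 : eps34 qh ((Algebra.TensorProduct.assoc k k k H H (H ⊗[k] H))
      ((Algebra.TensorProduct.map qh.comul (AlgHom.id k (H ⊗[k] H))) qh.assoc)) = 1 := by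
    rw [hrep]
    simp only [map_sum]
    calc ∑ i, eps34 qh ((Algebra.TensorProduct.assoc k k k H H (H ⊗[k] H))
          ((Algebra.TensorProduct.map qh.comul (AlgHom.id k (H ⊗[k] H)))
            (a i ⊗ₜ[k] (b i ⊗ₜ[k] c i))))
        = qh.comul (∑ i, qh.counit (b i) • qh.counit (c i) • a i) := by
          rw [map_sum qh.comul (fun i => qh.counit (b i) • qh.counit (c i) • a i) Finset.univ]
          refine Finset.sum_congr rfl fun i _ => ?_
          rw [Algebra.TensorProduct.map_tmul, eps34_assoc]
          simp only [AlgHom.coe_id, id_eq]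
          rw [c2_tmul, map_smul, map_smul, mul_smul]
      _ = 1 := by rw [esum qh hrep, map_one]
  have e3 : eps34 qh ((1 : H) ⊗ₜ[k] qh.assoc) = 1 := by
    rw [hrep, tmul_sum, map_sum]
    calc ∑ i, eps34 qh ((1 : H) ⊗ₜ[k] (a i ⊗ₜ[k] (b i ⊗ₜ[k] c i)))
        = (1 : H) ⊗ₜ[k] (∑ i, qh.counit (b i) • qh.counit (c i) • a i) := by
          rw [tmul_sum]
          refine Finset.sum_congr rfl fun i _ => ?_
          rw [eps34_tmul, c2_tmul, mul_smul, tmul_smul, tmul_smul]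
      _ = 1 := by rw [esum qh hrep, Algebra.TensorProduct.one_def]
  have e4 : eps34 qh ((Algebra.TensorProduct.map (AlgHom.id k H)
      ((Algebra.TensorProduct.assoc k k k H H H).toAlgHom.comp
        (Algebra.TensorProduct.map qh.comul (AlgHom.id k H)))) qh.assoc) = v := by
    rw [hrep]
    simp only [map_sum]
    refine Finset.sum_congr rfl fun i _ => ?_
    rw [Algebra.TensorProduct.map_tmul]
    simp only [AlgHom.coe_id, id_eq, AlgHom.comp_apply, Algebra.TensorProduct.map_tmul,
      AlgEquiv.toAlgHom_eq_coe, AlgHom.coe_coe, AlgEquiv.coe_toAlgHom]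
    rw [eps34, Algebra.TensorProduct.map_tmul, kill23_assoc, qh.counit_comul_right]
    simp only [AlgHom.coe_id, id_eq, tmul_smul]
  have e5 : eps34 qh ((Algebra.TensorProduct.map (AlgHom.id k H)
      (Algebra.TensorProduct.assoc k k k H H H).toAlgHom)
      ((Algebra.TensorProduct.assoc k k k H (H ⊗[k] H) H) (qh.assoc ⊗ₜ[k] (1 : H)))) = v := by
    rw [hrep, sum_tmul, map_sum, map_sum, map_sum]
    refine Finset.sum_congr rfl fun i _ => ?_
    rw [Algebra.TensorProduct.assoc_tmul, Algebra.TensorProduct.map_tmul]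
    simp only [AlgHom.coe_id, id_eq, AlgEquiv.toAlgHom_eq_coe, AlgHom.coe_coe, AlgEquiv.coe_toAlgHom]
    rw [Algebra.TensorProduct.assoc_tmul, eps34_tmul, c2_tmul, map_one, mul_one, tmul_smul]
  rw [e1, e2, e3, e4, e5, one_mul, mul_one] at h
  -- h : v = v * v
  have hVinv : Vcan qh qh.assocInv * v = 1 := by
    rw [← hvsum, ← map_mul, qh.inv_mul_assoc, map_one]
  have h2 : Vcan qh qh.assocInv * (v * v) = Vcan qh qh.assocInv * v := by rw [← h]
  rw [← mul_assoc, hVinv, one_mul] at h2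
  exact h2

theorem vcan_inv_eq_one : Vcan qh qh.assocInv = 1 := by
  obtain ⟨n, a, b, c, hrep⟩ := rep3 qh.assoc
  have h1 : Vcan qh qh.assoc = 1 := by rw [Vcan_eval qh hrep]; exact vsum qh hrep
  have := congrArg (Vcan qh) qh.assoc_mul_inv
  rw [map_mul, map_one, h1, one_mul] at this
  exact this

theorem vsum' {n : ℕ} {x y z : Fin n → H}
    (hrep : qh.assocInv = ∑ i, x i ⊗ₜ[k] (y i ⊗ₜ[k] z i)) :
    ∑ i, qh.counit (z i) • (x i ⊗ₜ[k] y i) = (1 : H ⊗[k] H) := by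
  rw [← Vcan_eval qh hrep]
  exact vcan_inv_eq_one qh

end UV2


section Forms

variable (qh : QuasiHopf k H)

theorem wform {n : ℕ} {x y z : Fin n → H}
    (hrep : qh.assocInv = ∑ i, x i ⊗ₜ[k] (y i ⊗ₜ[k] z i)) :
    drinfeldW qh = ∑ i, (qh.antipode (x i) * qh.alpha * y i) ⊗ₜ[k] z i := by
  rw [drinfeldW, hrep]
  simp only [map_sum, assoc_symm_tmul, rTensor_tmul, coe_comp, Function.comp_apply,
    map_tmul, mul'_apply, mulRight_apply, id_coe, id_eq]

theorem Tform (g h : H) :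
    drinfeldCan qh (g ⊗ₜ[k] h) = (g ⊗ₜ[k] (1 : H)) * (drinfeldW qh * qh.comul h) := by
  obtain ⟨m, u, v, hrep⟩ := rep2 (drinfeldW qh * qh.comul h)
  rw [drinfeldCan]
  simp only [coe_comp, Function.comp_apply, LinearEquiv.coe_coe, lTensor_tmul,
    mulLeft_apply, AlgHom.toLinearMap_apply]
  rw [hrep, tmul_sum, map_sum, map_sum, Finset.mul_sum]
  refine Finset.sum_congr rfl fun i _ => ?_
  rw [assoc_symm_tmul, rTensor_tmul, mul'_apply, Algebra.TensorProduct.tmul_mul_tmul, one_mul]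

theorem T'form (g h : H) :
    drinfeldCanInv qh (g ⊗ₜ[k] h) = (g ⊗ₜ[k] (1 : H)) * drinfeldInvAux qh h := by
  obtain ⟨m, u, v, hrep⟩ := rep2 (drinfeldInvAux qh h)
  rw [drinfeldCanInv]
  simp only [coe_comp, Function.comp_apply, LinearEquiv.coe_coe, lTensor_tmul]
  rw [hrep, tmul_sum, map_sum, map_sum, Finset.mul_sum]
  refine Finset.sum_congr rfl fun i _ => ?_
  rw [assoc_symm_tmul, rTensor_tmul, mul'_apply, Algebra.TensorProduct.tmul_mul_tmul, one_mul]

theorem T'left (g : H) (s : H ⊗[k] H) :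
    drinfeldCanInv qh ((g ⊗ₜ[k] (1 : H)) * s) = (g ⊗ₜ[k] (1 : H)) * drinfeldCanInv qh s := by
  induction s using TensorProduct.induction_on with
  | zero => rw [mul_zero, map_zero, mul_zero]
  | tmul x y =>
    rw [Algebra.TensorProduct.tmul_mul_tmul, one_mul, T'form, T'form, ← mul_assoc,
      Algebra.TensorProduct.tmul_mul_tmul, one_mul]
  | add s t hs ht => rw [mul_add, map_add, map_add, mul_add, hs, ht]

theorem Pform {n m : ℕ} {a b c : Fin n → H} {h : H} {h1 h2 : Fin m → H}
    (hφ : qh.assoc = ∑ i, a i ⊗ₜ[k] (b i ⊗ₜ[k] c i))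
    (hh : qh.comul h = ∑ j, h1 j ⊗ₜ[k] h2 j) :
    drinfeldInvAux qh h
      = ∑ j, ∑ i, (a i * qh.beta * qh.antipode (h1 j * b i)) ⊗ₜ[k] (h2 j * c i) := by
  rw [drinfeldInvAux]
  simp only [coe_comp, Function.comp_apply, LinearEquiv.coe_coe, AlgHom.toLinearMap_apply,
    mk_apply, mulRight_apply]
  rw [hh, hφ, tmul_sum, Finset.sum_mul_sum]
  simp only [map_sum]
  refine Finset.sum_congr rfl fun j _ => Finset.sum_congr rfl fun i _ => ?_
  rw [Algebra.TensorProduct.tmul_mul_tmul, one_mul, Algebra.TensorProduct.tmul_mul_tmul,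
    assoc_symm_tmul, rTensor_tmul]
  simp only [coe_comp, Function.comp_apply, map_tmul, mul'_apply, mulRight_apply, id_coe, id_eq]

end Forms

section Psi

theorem sum_rot {β : Type*} [AddCommMonoid β] {M L n : ℕ} (f : Fin M → Fin L → Fin n → β) :
    ∑ m, ∑ l, ∑ i, f m l i = ∑ l, ∑ i, ∑ m, f m l i := by
  rw [Finset.sum_comm]
  exact Finset.sum_congr rfl fun l _ => Finset.sum_comm

variable (qh : QuasiHopf k H)

/-- `Θ_d : u ⊗ (v ⊗ w) ↦ Σ u·β·S(d₁·v) ⊗ d₂·w` -/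
noncomputable def theta (d : H) : H ⊗[k] (H ⊗[k] H) →ₗ[k] H ⊗[k] H :=
  LinearMap.rTensor H (LinearMap.mul' k H)
    ∘ₗ (TensorProduct.assoc k H H H).symm.toLinearMap
    ∘ₗ LinearMap.lTensor H
        (TensorProduct.map (LinearMap.mulLeft k qh.beta ∘ₗ qh.antipode) LinearMap.id
          ∘ₗ LinearMap.mulLeft k (qh.comul d))

theorem theta_tmul {d : H} {M : ℕ} {D1 D2 : Fin M → H}
    (hd : qh.comul d = ∑ m, D1 m ⊗ₜ[k] D2 m) (u v w : H) :
    theta qh d (u ⊗ₜ[k] (v ⊗ₜ[k] w))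
      = ∑ m, (u * (qh.beta * qh.antipode (D1 m * v))) ⊗ₜ[k] (D2 m * w) := by
  rw [theta]
  simp only [coe_comp, Function.comp_apply, lTensor_tmul, mulLeft_apply, LinearEquiv.coe_coe]
  rw [hd, Finset.sum_mul, map_sum, tmul_sum, map_sum, map_sum]
  refine Finset.sum_congr rfl fun m _ => ?_
  rw [Algebra.TensorProduct.tmul_mul_tmul, map_tmul, assoc_symm_tmul, rTensor_tmul, mul'_apply]
  simp

/-- `Pform` over an arbitrary finite index set. -/
theorem Pform' {ι : Type*} {s : Finset ι} {n : ℕ} {a b c : Fin n → H} {h : H} {h1 h2 : ι → H}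
    (hφ : qh.assoc = ∑ i, a i ⊗ₜ[k] (b i ⊗ₜ[k] c i))
    (hh : qh.comul h = ∑ j ∈ s, h1 j ⊗ₜ[k] h2 j) :
    drinfeldInvAux qh h
      = ∑ j ∈ s, ∑ i, (a i * qh.beta * qh.antipode (h1 j * b i)) ⊗ₜ[k] (h2 j * c i) := by
  rw [drinfeldInvAux]
  simp only [coe_comp, Function.comp_apply, LinearEquiv.coe_coe, AlgHom.toLinearMap_apply,
    mk_apply, mulRight_apply]
  rw [hh, hφ, tmul_sum, Finset.sum_mul_sum]
  simp only [map_sum]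
  refine Finset.sum_congr rfl fun j _ => Finset.sum_congr rfl fun i _ => ?_
  rw [Algebra.TensorProduct.tmul_mul_tmul, one_mul, Algebra.TensorProduct.tmul_mul_tmul,
    assoc_symm_tmul, rTensor_tmul]
  simp only [coe_comp, Function.comp_apply, map_tmul, mul'_apply, mulRight_apply, id_coe, id_eq]

theorem claimA (d : H) (s : H ⊗[k] H) :
    theta qh d ((Algebra.TensorProduct.map (AlgHom.id k H) qh.comul) s * qh.assoc)
      = drinfeldCanInv qh (((1 : H) ⊗ₜ[k] d) * s) := by
  induction s using TensorProduct.induction_on with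
  | zero => rw [map_zero, zero_mul, map_zero, mul_zero, map_zero]
  | add x y hx hy => rw [map_add, add_mul, map_add, hx, hy, mul_add, map_add]
  | tmul p q =>
    obtain ⟨n, A, B, C, hφ⟩ := rep3 qh.assoc
    obtain ⟨L, q1, q2, hq⟩ := rep2 (qh.comul q)
    obtain ⟨M, D1, D2, hd⟩ := rep2 (qh.comul d)
    have hdq : qh.comul (d * q)
        = ∑ jl : Fin M × Fin L, (D1 jl.1 * q1 jl.2) ⊗ₜ[k] (D2 jl.1 * q2 jl.2) := by
      rw [map_mul, hd, hq, Finset.sum_mul_sum, ← Finset.univ_product_univ, Finset.sum_product]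
      simp only [Algebra.TensorProduct.tmul_mul_tmul]
    have hR : drinfeldCanInv qh (((1 : H) ⊗ₜ[k] d) * (p ⊗ₜ[k] q))
        = ∑ m : Fin M, ∑ l : Fin L, ∑ i,
            (p * (A i * qh.beta * qh.antipode (D1 m * q1 l * B i)))
              ⊗ₜ[k] (D2 m * q2 l * C i) := by
      rw [Algebra.TensorProduct.tmul_mul_tmul, one_mul, T'form, Pform' qh hφ hdq,
        ← Finset.univ_product_univ, Finset.sum_product, Finset.mul_sum]
      refine Finset.sum_congr rfl fun m _ => ?_
      rw [Finset.mul_sum]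
      refine Finset.sum_congr rfl fun l _ => ?_
      rw [Finset.mul_sum]
      refine Finset.sum_congr rfl fun i _ => ?_
      rw [Algebra.TensorProduct.tmul_mul_tmul, one_mul]
    rw [hR, sum_rot]
    rw [Algebra.TensorProduct.map_tmul]
    simp only [AlgHom.coe_id, id_eq]
    rw [hq, hφ, tmul_sum, Finset.sum_mul_sum]
    simp only [map_sum]
    refine Finset.sum_congr rfl fun l _ => Finset.sum_congr rfl fun i _ => ?_
    rw [Algebra.TensorProduct.tmul_mul_tmul, Algebra.TensorProduct.tmul_mul_tmul,
      theta_tmul qh hd]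
    refine Finset.sum_congr rfl fun m _ => ?_
    simp only [mul_assoc]

end Psi

section Psi2

variable (qh : QuasiHopf k H)

theorem claimB (d : H) (s : H ⊗[k] H) :
    theta qh d (qh.assoc * (Algebra.TensorProduct.assoc k k k H H H)
        ((Algebra.TensorProduct.map qh.comul (AlgHom.id k H)) s))
      = drinfeldInvAux qh d * ((1 : H) ⊗ₜ[k]
          (TensorProduct.lid k H) ((LinearMap.rTensor H qh.counit.toLinearMap) s)) := by
  induction s using TensorProduct.induction_on with
  | zero =>
    rw [map_zero, map_zero, mul_zero, map_zero, map_zero, map_zero, tmul_zero, mul_zero]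
  | add x y hx hy =>
    rw [map_add, map_add, mul_add, map_add, hx, hy, map_add, map_add, tmul_add, mul_add]
  | tmul p q =>
    obtain ⟨n, A, B, C, hφ⟩ := rep3 qh.assoc
    obtain ⟨L, p1, p2, hp⟩ := rep2 (qh.comul p)
    obtain ⟨M, D1, D2, hd⟩ := rep2 (qh.comul d)
    have key : ∀ X Z Y : H,
        ∑ l, (X * (p1 l * (qh.beta * qh.antipode (p2 l))) * Z) ⊗ₜ[k] Y
          = qh.counit p • ((X * qh.beta * Z) ⊗ₜ[k] Y) := by
      intro X Z Y
      rw [← sum_tmul, ← Finset.sum_mul, ← Finset.mul_sum, asum_r qh hp, mul_smul_comm,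
        smul_mul_assoc, smul_tmul']
    have hR : drinfeldInvAux qh d * ((1 : H) ⊗ₜ[k]
          (TensorProduct.lid k H) ((LinearMap.rTensor H qh.counit.toLinearMap) (p ⊗ₜ[k] q)))
        = qh.counit p • ∑ m, ∑ i,
            (A i * qh.beta * qh.antipode (D1 m * B i)) ⊗ₜ[k] (D2 m * (C i * q)) := by
      rw [rTensor_tmul, lid_tmul, AlgHom.toLinearMap_apply, tmul_smul, mul_smul_comm,
        Pform qh hφ hd, Finset.sum_mul]
      congr 1
      refine Finset.sum_congr rfl fun m _ => ?_
      rw [Finset.sum_mul]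
      refine Finset.sum_congr rfl fun i _ => ?_
      rw [Algebra.TensorProduct.tmul_mul_tmul, mul_one, mul_assoc (D2 m) (C i) q]
    rw [hR]
    rw [Algebra.TensorProduct.map_tmul]
    simp only [AlgHom.coe_id, id_eq]
    rw [hp, sum_tmul]
    simp only [map_sum, Algebra.TensorProduct.assoc_tmul]
    rw [hφ, Finset.sum_mul_sum]
    simp only [map_sum, Algebra.TensorProduct.tmul_mul_tmul]
    conv_rhs => simp only [Finset.smul_sum]
    conv_rhs => rw [Finset.sum_comm]
    refine Finset.sum_congr rfl fun i _ => ?_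
    calc ∑ l, theta qh d ((A i * p1 l) ⊗ₜ[k] ((B i * p2 l) ⊗ₜ[k] (C i * q)))
        = ∑ l, ∑ m, ((A i * p1 l) * (qh.beta * qh.antipode (D1 m * (B i * p2 l))))
            ⊗ₜ[k] (D2 m * (C i * q)) :=
          Finset.sum_congr rfl fun l _ => theta_tmul qh hd _ _ _
      _ = ∑ m, ∑ l, ((A i * (p1 l * (qh.beta * qh.antipode (p2 l))) *
            qh.antipode (D1 m * B i)) ⊗ₜ[k] (D2 m * (C i * q))) := by
          rw [Finset.sum_comm]
          refine Finset.sum_congr rfl fun m _ => Finset.sum_congr rfl fun l _ => ?_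
          rw [← mul_assoc (D1 m) (B i) (p2 l), qh.isQuasiAntipode.map_mul]
          congr 1
          simp only [mul_assoc]
      _ = ∑ m, qh.counit p •
            ((A i * qh.beta * qh.antipode (D1 m * B i)) ⊗ₜ[k] (D2 m * (C i * q))) :=
          Finset.sum_congr rfl fun m _ => key _ _ _

theorem psi (d c : H) :
    drinfeldCanInv qh (((1 : H) ⊗ₜ[k] d) * qh.comul c)
      = drinfeldInvAux qh d * ((1 : H) ⊗ₜ[k] c) := by
  rw [← claimA, qh.quasi_coassoc, claimB, qh.counit_comul_left]

end Psi2

section Zig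

variable (qh : QuasiHopf k H)

theorem rep4 (t : H ⊗[k] (H ⊗[k] (H ⊗[k] H))) :
    ∃ (n : ℕ) (a b c d : Fin n → H), t = ∑ i, a i ⊗ₜ[k] (b i ⊗ₜ[k] (c i ⊗ₜ[k] d i)) := by
  induction t using TensorProduct.induction_on with
  | zero => exact ⟨0, ![], ![], ![], ![], by simp⟩
  | tmul a t =>
    obtain ⟨n, b, c, d, rfl⟩ := rep3 t
    exact ⟨n, fun _ => a, b, c, d, by rw [tmul_sum]⟩
  | add x y hx hy =>
    obtain ⟨n, a, b, c, d, rfl⟩ := hx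
    obtain ⟨m, a', b', c', d', rfl⟩ := hy
    exact ⟨n + m, Fin.append a a', Fin.append b b', Fin.append c c', Fin.append d d', by
      simp [Fin.sum_univ_add, Fin.append_left, Fin.append_right]⟩

/-- `μ : a ⊗ (b ⊗ (c ⊗ e)) ↦ (S(a)·α·(b·(β·S(c)))) ⊗ e`. -/
noncomputable def mu : (H ⊗[k] (H ⊗[k] (H ⊗[k] H))) →ₗ[k] H ⊗[k] H :=
  LinearMap.rTensor H (LinearMap.mul' k H)
    ∘ₗ (TensorProduct.assoc k H H H).symm.toLinearMap
    ∘ₗ TensorProduct.map (LinearMap.mulRight k qh.alpha ∘ₗ qh.antipode)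
        (LinearMap.rTensor H (LinearMap.mul' k H)
          ∘ₗ (TensorProduct.assoc k H H H).symm.toLinearMap
          ∘ₗ LinearMap.lTensor H
              (TensorProduct.map (LinearMap.mulLeft k qh.beta ∘ₗ qh.antipode) LinearMap.id))

@[simp] theorem mu_tmul (a b c e : H) :
    mu qh (a ⊗ₜ[k] (b ⊗ₜ[k] (c ⊗ₜ[k] e)))
      = (qh.antipode a * qh.alpha * (b * (qh.beta * qh.antipode c))) ⊗ₜ[k] e := by
  rw [mu]
  simp only [coe_comp, Function.comp_apply, LinearEquiv.coe_coe, map_tmul, lTensor_tmul,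
    assoc_symm_tmul, rTensor_tmul, mul'_apply, mulRight_apply, mulLeft_apply, id_coe, id_eq]

theorem assoc4_tmul₂ (x y : H) (t : H ⊗[k] H) :
    (Algebra.TensorProduct.assoc k k k H H (H ⊗[k] H)) ((x ⊗ₜ[k] y) ⊗ₜ[k] t)
      = x ⊗ₜ[k] (y ⊗ₜ[k] t) := by
  induction t using TensorProduct.induction_on with
  | zero => rw [tmul_zero, map_zero, tmul_zero, tmul_zero]
  | tmul p q => rw [Algebra.TensorProduct.assoc_tmul]
  | add u v hu hv => rw [tmul_add, map_add, hu, hv, tmul_add, tmul_add]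

theorem A4_one_mul (x : H ⊗[k] (H ⊗[k] (H ⊗[k] H))) : 1 * x = x := one_mul x
theorem A4_mul_one (x : H ⊗[k] (H ⊗[k] (H ⊗[k] H))) : x * 1 = x := mul_one x
theorem A4_mul_assoc (x y z : H ⊗[k] (H ⊗[k] (H ⊗[k] H))) : x * y * z = x * (y * z) :=
  mul_assoc x y z

theorem A4_zero_mul (x : H ⊗[k] (H ⊗[k] (H ⊗[k] H))) : 0 * x = 0 := zero_mul x
theorem A4_mul_zero (x : H ⊗[k] (H ⊗[k] (H ⊗[k] H))) : x * 0 = 0 := mul_zero x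
theorem A4_add_mul (x y z : H ⊗[k] (H ⊗[k] (H ⊗[k] H))) : (x + y) * z = x * z + y * z :=
  Distrib.right_distrib x y z
theorem A4_mul_add (x y z : H ⊗[k] (H ⊗[k] (H ⊗[k] H))) : x * (y + z) = x * y + x * z :=
  Distrib.left_distrib x y z
theorem A4_sum_mul {ι : Type*} (s : Finset ι) (f : ι → H ⊗[k] (H ⊗[k] (H ⊗[k] H)))
    (y : H ⊗[k] (H ⊗[k] (H ⊗[k] H))) : (∑ i ∈ s, f i) * y = ∑ i ∈ s, f i * y :=
  Finset.sum_mul s f y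
theorem A4_mul_sum {ι : Type*} (s : Finset ι) (f : ι → H ⊗[k] (H ⊗[k] (H ⊗[k] H)))
    (y : H ⊗[k] (H ⊗[k] (H ⊗[k] H))) : (y * ∑ i ∈ s, f i) = ∑ i ∈ s, y * f i :=
  Finset.mul_sum s f y
theorem A4_sum_mul_sum {ι κ : Type*} (s : Finset ι) (t : Finset κ)
    (f : ι → H ⊗[k] (H ⊗[k] (H ⊗[k] H))) (g : κ → H ⊗[k] (H ⊗[k] (H ⊗[k] H))) :
    (∑ i ∈ s, f i) * (∑ j ∈ t, g j) = ∑ i ∈ s, ∑ j ∈ t, f i * g j :=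
  Finset.sum_mul_sum s t f g

noncomputable def QG1 : (H ⊗[k] (H ⊗[k] H)) →ₐ[k] H ⊗[k] (H ⊗[k] (H ⊗[k] H)) :=
  Algebra.TensorProduct.map (AlgHom.id k H)
    (Algebra.TensorProduct.map (AlgHom.id k H) qh.comul)

noncomputable def QG2 : (H ⊗[k] (H ⊗[k] H)) →ₐ[k] H ⊗[k] (H ⊗[k] (H ⊗[k] H)) :=
  (Algebra.TensorProduct.assoc k k k H H (H ⊗[k] H)).toAlgHom.comp
    (Algebra.TensorProduct.map qh.comul (AlgHom.id k (H ⊗[k] H)))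

noncomputable def QG3 (_qh : QuasiHopf k H) : (H ⊗[k] (H ⊗[k] H)) →ₐ[k] H ⊗[k] (H ⊗[k] (H ⊗[k] H)) :=
  Algebra.TensorProduct.includeRight

noncomputable def QG4 : (H ⊗[k] (H ⊗[k] H)) →ₐ[k] H ⊗[k] (H ⊗[k] (H ⊗[k] H)) :=
  Algebra.TensorProduct.map (AlgHom.id k H)
    ((Algebra.TensorProduct.assoc k k k H H H).toAlgHom.comp
      (Algebra.TensorProduct.map qh.comul (AlgHom.id k H)))

noncomputable def QG5 (_qh : QuasiHopf k H) : (H ⊗[k] (H ⊗[k] H)) →ₐ[k] H ⊗[k] (H ⊗[k] (H ⊗[k] H)) :=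
  (Algebra.TensorProduct.map (AlgHom.id k H)
      (Algebra.TensorProduct.assoc k k k H H H).toAlgHom).comp
    ((Algebra.TensorProduct.assoc k k k H (H ⊗[k] H) H).toAlgHom.comp
      Algebra.TensorProduct.includeLeft)

theorem pent : QG1 qh qh.assoc * QG2 qh qh.assoc
    = QG3 qh qh.assoc * QG4 qh qh.assoc * QG5 qh qh.assoc :=
  qh.pentagon

theorem hE : QG1 qh qh.assocInv * QG3 qh qh.assoc
    = QG2 qh qh.assoc * (QG5 qh qh.assocInv * QG4 qh qh.assocInv) := by
  have i1 : QG1 qh qh.assocInv * QG1 qh qh.assoc = 1 := by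
    rw [← map_mul, qh.inv_mul_assoc, show QG1 qh 1 = 1 from (QG1 qh).map_one]
  have i4 : QG4 qh qh.assoc * QG4 qh qh.assocInv = 1 := by
    rw [← map_mul, qh.assoc_mul_inv, show QG4 qh 1 = 1 from (QG4 qh).map_one]
  have i5 : QG5 qh qh.assoc * QG5 qh qh.assocInv = 1 := by
    rw [← map_mul, qh.assoc_mul_inv, show QG5 qh 1 = 1 from (QG5 qh).map_one]
  have h3 : QG3 qh qh.assoc
      = QG1 qh qh.assoc * QG2 qh qh.assoc * (QG5 qh qh.assocInv * QG4 qh qh.assocInv) := by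
    calc QG3 qh qh.assoc
        = QG3 qh qh.assoc * (QG4 qh qh.assoc
            * ((QG5 qh qh.assoc * QG5 qh qh.assocInv) * QG4 qh qh.assocInv)) := by
          rw [i5, A4_one_mul, i4, A4_mul_one]
      _ = QG3 qh qh.assoc * QG4 qh qh.assoc * QG5 qh qh.assoc
            * (QG5 qh qh.assocInv * QG4 qh qh.assocInv) := by
          simp only [A4_mul_assoc]
      _ = QG1 qh qh.assoc * QG2 qh qh.assoc
            * (QG5 qh qh.assocInv * QG4 qh qh.assocInv) := by rw [← pent]
  rw [h3, ← A4_mul_assoc,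
    ← A4_mul_assoc (QG1 qh qh.assocInv) (QG1 qh qh.assoc) (QG2 qh qh.assoc), i1, A4_one_mul]

end Zig

section Zig2

variable (qh : QuasiHopf k H)

theorem induction3 {P : H ⊗[k] (H ⊗[k] H) → Prop} (t : H ⊗[k] (H ⊗[k] H)) (zero : P 0)
    (tmul : ∀ x y z : H, P (x ⊗ₜ[k] (y ⊗ₜ[k] z)))
    (add : ∀ u v, P u → P v → P (u + v)) : P t := by
  obtain ⟨n, a, b, c, rfl⟩ := rep3 t
  exact Finset.sum_induction _ P add zero fun i _ => tmul _ _ _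

noncomputable def iota (_qh : QuasiHopf k H) :
    (H ⊗[k] H) →ₐ[k] H ⊗[k] (H ⊗[k] (H ⊗[k] H)) :=
  (Algebra.TensorProduct.includeRight :
      (H ⊗[k] (H ⊗[k] H)) →ₐ[k] H ⊗[k] (H ⊗[k] (H ⊗[k] H))).comp
    Algebra.TensorProduct.includeRight

@[simp] theorem iota_tmul (b c : H) :
    iota qh (b ⊗ₜ[k] c) = (1 : H) ⊗ₜ[k] ((1 : H) ⊗ₜ[k] (b ⊗ₜ[k] c)) := rfl

noncomputable def kappa (_qh : QuasiHopf k H) :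
    (H ⊗[k] H) →ₐ[k] H ⊗[k] (H ⊗[k] (H ⊗[k] H)) :=
  Algebra.TensorProduct.map (AlgHom.id k H)
    ((Algebra.TensorProduct.includeRight :
        (H ⊗[k] H) →ₐ[k] H ⊗[k] (H ⊗[k] H)).comp Algebra.TensorProduct.includeRight)

@[simp] theorem kappa_tmul (u w : H) :
    kappa qh (u ⊗ₜ[k] w) = u ⊗ₜ[k] ((1 : H) ⊗ₜ[k] ((1 : H) ⊗ₜ[k] w)) := rfl

noncomputable def epsMid : (H ⊗[k] (H ⊗[k] H)) →ₐ[k] H ⊗[k] H :=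
  Algebra.TensorProduct.map (AlgHom.id k H)
    ((Algebra.TensorProduct.lid k H).toAlgHom.comp
      (Algebra.TensorProduct.map qh.counit (AlgHom.id k H)))

theorem epsMid_assocInv : epsMid qh qh.assocInv = 1 := counit_mid_inv qh

@[simp] theorem epsMid_tmul (u v w : H) :
    epsMid qh (u ⊗ₜ[k] (v ⊗ₜ[k] w)) = qh.counit v • (u ⊗ₜ[k] w) := by
  rw [epsMid]
  simp [Algebra.TensorProduct.lid_tmul]

theorem kill1_phi : kill1 qh (H ⊗[k] H) qh.assoc = 1 := by
  obtain ⟨n, a, b, c, hrep⟩ := rep3 qh.assoc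
  rw [hrep, map_sum]
  calc ∑ i, kill1 qh (H ⊗[k] H) (a i ⊗ₜ[k] (b i ⊗ₜ[k] c i))
      = ∑ i, qh.counit (a i) • (b i ⊗ₜ[k] c i) :=
        Finset.sum_congr rfl fun i _ => kill1_tmul qh _ _ _
    _ = 1 := usum qh hrep

theorem stage0 (s : H ⊗[k] (H ⊗[k] H)) :
    drinfeldCanInv qh ((LinearMap.rTensor H
        (LinearMap.mul' k H ∘ₗ
          TensorProduct.map (LinearMap.mulRight k qh.alpha ∘ₗ qh.antipode) LinearMap.id))
      ((TensorProduct.assoc k H H H).symm s))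
      = mu qh (QG1 qh s * QG3 qh qh.assoc) := by
  induction s using induction3 with
  | zero => rw [map_zero, map_zero, map_zero, map_zero, A4_zero_mul, map_zero]
  | add u v hu hv => rw [map_add, map_add, map_add, hu, hv, map_add, A4_add_mul, map_add]
  | tmul x y z =>
    obtain ⟨n, A, B, C, hφ⟩ := rep3 qh.assoc
    obtain ⟨L, z1, z2, hz⟩ := rep2 (qh.comul z)
    have hL : (LinearMap.rTensor H
        (LinearMap.mul' k H ∘ₗ
          TensorProduct.map (LinearMap.mulRight k qh.alpha ∘ₗ qh.antipode) LinearMap.id))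
        ((TensorProduct.assoc k H H H).symm (x ⊗ₜ[k] (y ⊗ₜ[k] z)))
        = (qh.antipode x * qh.alpha * y) ⊗ₜ[k] z := by
      rw [assoc_symm_tmul, rTensor_tmul]
      simp only [coe_comp, Function.comp_apply, map_tmul, mul'_apply, mulRight_apply,
        id_coe, id_eq]
    rw [hL, T'form, Pform' qh hφ hz]
    -- RHS
    rw [QG1, QG3, Algebra.TensorProduct.includeRight_apply, Algebra.TensorProduct.map_tmul,
      Algebra.TensorProduct.map_tmul]
    simp only [AlgHom.coe_id, id_eq]
    rw [hz, hφ, tmul_sum, tmul_sum, tmul_sum, A4_sum_mul_sum]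
    simp only [map_sum, Algebra.TensorProduct.tmul_mul_tmul]
    rw [Finset.mul_sum]
    refine Finset.sum_congr rfl fun l _ => ?_
    rw [Finset.mul_sum]
    refine Finset.sum_congr rfl fun j _ => ?_
    rw [mu_tmul, Algebra.TensorProduct.tmul_mul_tmul, one_mul]
    congr 1
    simp only [one_mul, mul_one, mul_assoc]

theorem stage1 (s : H ⊗[k] (H ⊗[k] H)) (W : H ⊗[k] (H ⊗[k] (H ⊗[k] H))) :
    mu qh (QG2 qh s * W) = mu qh (iota qh (kill1 qh (H ⊗[k] H) s) * W) := by
  induction s using induction3 with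
  | zero => rw [map_zero, A4_zero_mul, map_zero, map_zero, map_zero, A4_zero_mul, map_zero]
  | add u v hu hv =>
    rw [map_add, A4_add_mul, map_add, hu, hv, map_add, map_add, A4_add_mul, map_add]
  | tmul x y z =>
    obtain ⟨R, x1, x2, hx⟩ := rep2 (qh.comul x)
    obtain ⟨Q, w1, w2, w3, w4, hW⟩ := rep4 W
    have key : ∀ X Z Y : H,
        ∑ r, (X * (qh.antipode (x1 r) * qh.alpha * x2 r) * Z) ⊗ₜ[k] Y
          = qh.counit x • ((X * qh.alpha * Z) ⊗ₜ[k] Y) := by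
      intro X Z Y
      rw [← sum_tmul, ← Finset.sum_mul, ← Finset.mul_sum, asum_l qh hx, mul_smul_comm,
        smul_mul_assoc, smul_tmul']
    have hQG2 : QG2 qh (x ⊗ₜ[k] (y ⊗ₜ[k] z))
        = ∑ r, x1 r ⊗ₜ[k] (x2 r ⊗ₜ[k] (y ⊗ₜ[k] z)) := by
      rw [QG2, AlgHom.comp_apply, Algebra.TensorProduct.map_tmul, hx, sum_tmul, map_sum]
      simp only [AlgHom.coe_id, id_eq, AlgEquiv.toAlgHom_eq_coe, AlgHom.coe_coe, AlgEquiv.coe_toAlgHom]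
      exact Finset.sum_congr rfl fun r _ => by rw [Algebra.TensorProduct.assoc_tmul]
    rw [hQG2, hW, A4_sum_mul_sum]
    simp only [map_sum, Algebra.TensorProduct.tmul_mul_tmul, mu_tmul]
    rw [Finset.sum_comm]
    -- LHS now : ∑ q, ∑ r, ...
    have hterm : ∀ (q : Fin Q) (r : Fin R),
        (qh.antipode (x1 r * w1 q) * qh.alpha *
            (x2 r * w2 q * (qh.beta * qh.antipode (y * w3 q)))) ⊗ₜ[k] (z * w4 q)
          = (qh.antipode (w1 q) * (qh.antipode (x1 r) * qh.alpha * x2 r) *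
              (w2 q * (qh.beta * qh.antipode (y * w3 q)))) ⊗ₜ[k] (z * w4 q) := by
      intro q r
      rw [qh.isQuasiAntipode.map_mul]
      congr 1
      simp only [mul_assoc]
    calc ∑ q, ∑ r, (qh.antipode (x1 r * w1 q) * qh.alpha *
            (x2 r * w2 q * (qh.beta * qh.antipode (y * w3 q)))) ⊗ₜ[k] (z * w4 q)
        = ∑ q, qh.counit x • ((qh.antipode (w1 q) * qh.alpha *
            (w2 q * (qh.beta * qh.antipode (y * w3 q)))) ⊗ₜ[k] (z * w4 q)) := by
          refine Finset.sum_congr rfl fun q _ => ?_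
          rw [Finset.sum_congr rfl fun r _ => hterm q r]
          exact key _ _ _
      _ = mu qh (iota qh (kill1 qh (H ⊗[k] H) (x ⊗ₜ[k] (y ⊗ₜ[k] z)))
            * ∑ i, w1 i ⊗ₜ[k] (w2 i ⊗ₜ[k] (w3 i ⊗ₜ[k] w4 i))) := by
          rw [kill1_tmul, map_smul, smul_mul_assoc, map_smul, iota_tmul, A4_mul_sum]
          simp only [map_sum, Algebra.TensorProduct.tmul_mul_tmul, mu_tmul, one_mul,
            Finset.smul_sum]

theorem stage2 (s : H ⊗[k] (H ⊗[k] H)) (W : H ⊗[k] (H ⊗[k] (H ⊗[k] H))) :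
    mu qh (W * QG4 qh s) = mu qh (W * kappa qh (epsMid qh s)) := by
  induction s using induction3 with
  | zero => rw [map_zero, A4_mul_zero, map_zero, map_zero, map_zero, A4_mul_zero, map_zero]
  | add u v hu hv =>
    rw [map_add, A4_mul_add, map_add, hu, hv, map_add, map_add, A4_mul_add, map_add]
  | tmul u v w =>
    obtain ⟨L, v1, v2, hv⟩ := rep2 (qh.comul v)
    obtain ⟨Q, w1, w2, w3, w4, hW⟩ := rep4 W
    have key : ∀ X Z Y : H,
        ∑ l, (X * (v1 l * (qh.beta * qh.antipode (v2 l))) * Z) ⊗ₜ[k] Y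
          = qh.counit v • ((X * qh.beta * Z) ⊗ₜ[k] Y) := by
      intro X Z Y
      rw [← sum_tmul, ← Finset.sum_mul, ← Finset.mul_sum, asum_r qh hv, mul_smul_comm,
        smul_mul_assoc, smul_tmul']
    have hQG4 : QG4 qh (u ⊗ₜ[k] (v ⊗ₜ[k] w))
        = ∑ l, u ⊗ₜ[k] (v1 l ⊗ₜ[k] (v2 l ⊗ₜ[k] w)) := by
      rw [QG4, Algebra.TensorProduct.map_tmul]
      simp only [AlgHom.coe_id, id_eq, AlgHom.comp_apply, Algebra.TensorProduct.map_tmul,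
        AlgEquiv.toAlgHom_eq_coe, AlgHom.coe_coe, AlgEquiv.coe_toAlgHom]
      rw [hv, sum_tmul, map_sum, tmul_sum]
      exact Finset.sum_congr rfl fun l _ => by rw [Algebra.TensorProduct.assoc_tmul]
    rw [hQG4, hW, A4_sum_mul_sum]
    simp only [map_sum, Algebra.TensorProduct.tmul_mul_tmul, mu_tmul]
    have hterm : ∀ (q : Fin Q) (l : Fin L),
        (qh.antipode (w1 q * u) * qh.alpha *
            (w2 q * v1 l * (qh.beta * qh.antipode (w3 q * v2 l)))) ⊗ₜ[k] (w4 q * w)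
          = ((qh.antipode (w1 q * u) * qh.alpha * w2 q) *
              (v1 l * (qh.beta * qh.antipode (v2 l))) *
              qh.antipode (w3 q)) ⊗ₜ[k] (w4 q * w) := by
      intro q l
      rw [qh.isQuasiAntipode.map_mul (w3 q) (v2 l)]
      congr 1
      simp only [mul_assoc]
    calc ∑ q, ∑ l, (qh.antipode (w1 q * u) * qh.alpha *
            (w2 q * v1 l * (qh.beta * qh.antipode (w3 q * v2 l)))) ⊗ₜ[k] (w4 q * w)
        = ∑ q, qh.counit v • (((qh.antipode (w1 q * u) * qh.alpha * w2 q) * qh.beta *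
            qh.antipode (w3 q)) ⊗ₜ[k] (w4 q * w)) := by
          refine Finset.sum_congr rfl fun q _ => ?_
          rw [Finset.sum_congr rfl fun l _ => hterm q l]
          exact key _ _ _
      _ = mu qh ((∑ i, w1 i ⊗ₜ[k] (w2 i ⊗ₜ[k] (w3 i ⊗ₜ[k] w4 i)))
            * kappa qh (epsMid qh (u ⊗ₜ[k] (v ⊗ₜ[k] w)))) := by
          rw [epsMid_tmul, map_smul, mul_smul_comm, map_smul, kappa_tmul, A4_sum_mul]
          simp only [map_sum, Algebra.TensorProduct.tmul_mul_tmul, mu_tmul, mul_one,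
            Finset.smul_sum]
          refine Finset.sum_congr rfl fun q _ => ?_
          congr 1
          congr 1
          simp only [mul_assoc]

theorem stage3 : mu qh (QG5 qh qh.assocInv) = 1 := by
  obtain ⟨n, x, y, z, hrep⟩ := rep3 qh.assocInv
  have h5 : QG5 qh qh.assocInv = ∑ i, x i ⊗ₜ[k] (y i ⊗ₜ[k] (z i ⊗ₜ[k] (1 : H))) := by
    rw [QG5, AlgHom.comp_apply, AlgHom.comp_apply, Algebra.TensorProduct.includeLeft_apply,
      hrep, sum_tmul, map_sum, map_sum]
    refine Finset.sum_congr rfl fun i _ => ?_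
    simp only [AlgEquiv.toAlgHom_eq_coe, AlgHom.coe_coe, AlgEquiv.coe_toAlgHom]
    rw [Algebra.TensorProduct.assoc_tmul, Algebra.TensorProduct.map_tmul]
    simp only [AlgHom.coe_id, id_eq, AlgHom.coe_coe, AlgEquiv.coe_toAlgHom]
    rw [Algebra.TensorProduct.assoc_tmul]
  rw [h5, map_sum]
  simp only [mu_tmul]
  rw [← sum_tmul]
  calc (∑ i, qh.antipode (x i) * qh.alpha * (y i * (qh.beta * qh.antipode (z i))))
        ⊗ₜ[k] (1 : H)
      = (∑ i, qh.antipode (x i) * qh.alpha * (y i * qh.beta * qh.antipode (z i)))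
          ⊗ₜ[k] (1 : H) := by
        congr 1
        exact Finset.sum_congr rfl fun i _ => by simp only [mul_assoc]
    _ = 1 := by rw [phi'_contract qh hrep, Algebra.TensorProduct.one_def]

theorem Z2 : drinfeldCanInv qh (drinfeldW qh) = 1 := by
  rw [drinfeldW, stage0, hE, stage1, kill1_phi, show iota qh 1 = 1 from (iota qh).map_one, A4_one_mul, stage2,
    epsMid_assocInv, show kappa qh 1 = 1 from (kappa qh).map_one, A4_mul_one, stage3]

end Zig2

section Inverse

variable (qh : QuasiHopf k H)

theorem TT' (t : H ⊗[k] H) : drinfeldCanInv qh (drinfeldCan qh t) = t := by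
  induction t using TensorProduct.induction_on with
  | zero => rw [map_zero, map_zero]
  | add x y hx hy => rw [map_add, map_add, hx, hy]
  | tmul g h =>
    rw [Tform, T'left]
    have hw : drinfeldCanInv qh (drinfeldW qh * qh.comul h) = (1 : H) ⊗ₜ[k] h := by
      obtain ⟨m, u, v, hrep⟩ := rep2 (drinfeldW qh)
      have hZ : (∑ i, (u i ⊗ₜ[k] (1 : H)) * drinfeldInvAux qh (v i)) = 1 := by
        have hz2 := Z2 qh
        rw [hrep, map_sum] at hz2
        calc ∑ i, (u i ⊗ₜ[k] (1 : H)) * drinfeldInvAux qh (v i)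
            = ∑ i, drinfeldCanInv qh (u i ⊗ₜ[k] v i) :=
              Finset.sum_congr rfl fun i _ => (T'form qh _ _).symm
          _ = 1 := hz2
      calc drinfeldCanInv qh (drinfeldW qh * qh.comul h)
          = ∑ i, drinfeldCanInv qh
              ((u i ⊗ₜ[k] (1 : H)) * (((1 : H) ⊗ₜ[k] v i) * qh.comul h)) := by
            rw [hrep, Finset.sum_mul, map_sum]
            refine Finset.sum_congr rfl fun i _ => ?_
            congr 1
            rw [← mul_assoc, Algebra.TensorProduct.tmul_mul_tmul, mul_one, one_mul]
        _ = ∑ i, (u i ⊗ₜ[k] (1 : H)) * (drinfeldInvAux qh (v i) * ((1 : H) ⊗ₜ[k] h)) := by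
            refine Finset.sum_congr rfl fun i _ => ?_
            rw [T'left, psi]
        _ = (∑ i, (u i ⊗ₜ[k] (1 : H)) * drinfeldInvAux qh (v i)) * ((1 : H) ⊗ₜ[k] h) := by
            rw [Finset.sum_mul]
            exact Finset.sum_congr rfl fun i _ => (mul_assoc _ _ _).symm
        _ = (1 : H) ⊗ₜ[k] h := by rw [hZ, one_mul]
    rw [hw, Algebra.TensorProduct.tmul_mul_tmul, mul_one, one_mul]

theorem Tinj : Function.Injective (drinfeldCan qh) := by
  intro a b hab
  have h := congrArg (drinfeldCanInv qh) hab
  rwa [TT', TT'] at h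

/-- The contraction `a ⊗ b ↦ ε(b) • a`. -/
noncomputable def ctr : H ⊗[k] H →ₗ[k] H :=
  (TensorProduct.rid k H).toLinearMap ∘ₗ LinearMap.lTensor H qh.counit.toLinearMap

@[simp] theorem ctr_tmul (a b : H) : ctr qh (a ⊗ₜ[k] b) = qh.counit b • a := by
  simp [ctr, rid_tmul]

theorem ctr_P (b : H) : ctr qh (drinfeldInvAux qh b) = qh.beta * qh.antipode b := by
  obtain ⟨n, A, B, C, hφ⟩ := rep3 qh.assoc
  obtain ⟨m, b1, b2, hb⟩ := rep2 (qh.comul b)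
  rw [Pform qh hφ hb, map_sum]
  simp only [map_sum, ctr_tmul]
  have hstep : ∀ i, (∑ j, qh.counit (b2 j * C i) • (A i * qh.beta * qh.antipode (b1 j * B i)))
      = qh.counit (C i) • (A i * qh.beta * qh.antipode (b * B i)) := by
    intro i
    conv_rhs => rw [← csum_r qh hb]
    rw [Finset.sum_mul, map_sum, Finset.mul_sum, Finset.smul_sum]
    refine Finset.sum_congr rfl fun j _ => ?_
    rw [smul_mul_assoc, map_smul, mul_smul_comm, smul_smul, map_mul,
      mul_comm (qh.counit (b2 j)) (qh.counit (C i))]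
  rw [Finset.sum_comm, Finset.sum_congr rfl fun i _ => hstep i]
  have h2 := congrArg (fun t => (LinearMap.mul' k H)
    ((TensorProduct.map (LinearMap.mulRight k qh.beta)
      (qh.antipode ∘ₗ LinearMap.mulLeft k b)) t)) (vsum qh hφ)
  rw [Algebra.TensorProduct.one_def] at h2
  simpa [map_sum] using h2

theorem ctr_w : ctr qh (drinfeldW qh) = qh.alpha := by
  obtain ⟨n, x, y, z, hrep⟩ := rep3 qh.assocInv
  rw [wform qh hrep, map_sum]
  simp only [ctr_tmul]
  have h2 := congrArg (fun t => (LinearMap.mul' k H)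
    ((TensorProduct.map (LinearMap.mulRight k qh.alpha ∘ₗ qh.antipode) LinearMap.id) t))
    (vsum' qh hrep)
  rw [Algebra.TensorProduct.one_def] at h2
  simpa [map_sum, qh.isQuasiAntipode.map_one] using h2

theorem S_from_w (x : H) :
    (LinearMap.mul' k H) ((LinearMap.lTensor H
        (LinearMap.mulLeft k qh.beta ∘ₗ qh.antipode ∘ₗ LinearMap.mulLeft k x))
      (drinfeldW qh)) = qh.antipode x := by
  obtain ⟨n, x', y, z, hrep⟩ := rep3 qh.assocInv
  rw [wform qh hrep, map_sum, map_sum]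
  calc ∑ i, (LinearMap.mul' k H) ((LinearMap.lTensor H
        (LinearMap.mulLeft k qh.beta ∘ₗ qh.antipode ∘ₗ LinearMap.mulLeft k x))
        ((qh.antipode (x' i) * qh.alpha * y i) ⊗ₜ[k] z i))
      = ∑ i, (qh.antipode (x' i) * qh.alpha * (y i * qh.beta * qh.antipode (z i)))
          * qh.antipode x := by
        refine Finset.sum_congr rfl fun i _ => ?_
        rw [lTensor_tmul]
        simp only [coe_comp, Function.comp_apply, mulLeft_apply, mul'_apply]
        rw [qh.isQuasiAntipode.map_mul]
        simp only [mul_assoc]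
    _ = qh.antipode x := by
        rw [← Finset.sum_mul, phi'_contract qh hrep, one_mul]

end Inverse
/-- A finite-dimensional subquasibialgebra `K ⊆ H` of a quasi-Hopf algebra
with `S(φ⁻¹⁽¹⁾)·α·φ⁻¹⁽²⁾ ⊗ φ⁻¹⁽³⁾ ∈ K⊗K` is a quasi-Hopf subalgebra:
`S(K) ⊆ K` and `α, β ∈ K`. -/
theorem subquasibialgebra_isQuasiHopfSub (qh : QuasiHopf k H) (K : Subalgebra k H)
    [FiniteDimensional k K]
    (hΔ : ∀ x ∈ K, qh.comul x ∈
      LinearMap.range (TensorProduct.map K.val.toLinearMap K.val.toLinearMap))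
    (hφ : qh.assoc ∈ LinearMap.range (TensorProduct.map K.val.toLinearMap
      (TensorProduct.map K.val.toLinearMap K.val.toLinearMap)))
    (hw : drinfeldW qh ∈ LinearMap.range (TensorProduct.map K.val.toLinearMap K.val.toLinearMap)) :
    (∀ x ∈ K, qh.antipode x ∈ K) ∧ qh.alpha ∈ K ∧ qh.beta ∈ K := by
  classical
  set F : K ⊗[k] K →ₐ[k] H ⊗[k] H := Algebra.TensorProduct.map K.val K.val with hF
  have hFlin : (TensorProduct.map K.val.toLinearMap K.val.toLinearMap) = F.toLinearMap := by
    apply TensorProduct.ext'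
    intro a b
    simp [hF]
  rw [hFlin] at hΔ hw
  set M := LinearMap.range F.toLinearMap with hM
  have hmem : ∀ (a b : H), a ∈ K → b ∈ K → a ⊗ₜ[k] b ∈ M := fun a b ha hb =>
    ⟨(⟨a, ha⟩ : K) ⊗ₜ[k] (⟨b, hb⟩ : K), by simp [hF]⟩
  have hmul : ∀ x y, x ∈ M → y ∈ M → x * y ∈ M := by
    rintro _ _ ⟨x, rfl⟩ ⟨y, rfl⟩
    exact ⟨x * y, map_mul F x y⟩
  have hTM : ∀ x ∈ M, drinfeldCan qh x ∈ M := by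
    rintro _ ⟨t, rfl⟩
    induction t using TensorProduct.induction_on with
    | zero => rw [map_zero, map_zero]; exact M.zero_mem
    | tmul a b =>
      have hab : F.toLinearMap (a ⊗ₜ[k] b) = (a : H) ⊗ₜ[k] (b : H) := by simp [hF]
      rw [hab, Tform]
      exact hmul _ _ (hmem _ _ a.2 K.one_mem) (hmul _ _ hw (hΔ b b.2))
    | add x y hx hy => rw [map_add, map_add]; exact M.add_mem hx hy
  haveI hfinM : FiniteDimensional k M := inferInstance
  have hTMinj : Function.Injective ((drinfeldCan qh).restrict hTM) := by
    intro a b hab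
    have h1 : drinfeldCan qh (a : H ⊗[k] H) = drinfeldCan qh (b : H ⊗[k] H) := by
      have h2 := congrArg Subtype.val hab
      simpa [LinearMap.restrict_apply] using h2
    exact Subtype.ext (Tinj qh h1)
  have hTMsurj : Function.Surjective ((drinfeldCan qh).restrict hTM) :=
    LinearMap.injective_iff_surjective.mp hTMinj
  have hPmem : ∀ b : H, b ∈ K → drinfeldInvAux qh b ∈ M := by
    intro b hb
    obtain ⟨z, hz⟩ := hTMsurj ⟨(1 : H) ⊗ₜ[k] b, hmem _ _ K.one_mem hb⟩
    have hz' : drinfeldCan qh (z : H ⊗[k] H) = (1 : H) ⊗ₜ[k] b := by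
      have h2 := congrArg Subtype.val hz
      simpa [LinearMap.restrict_apply] using h2
    have heq : drinfeldInvAux qh b = (z : H ⊗[k] H) := by
      have h1 : drinfeldCanInv qh ((1 : H) ⊗ₜ[k] b) = drinfeldInvAux qh b := by
        rw [T'form, ← Algebra.TensorProduct.one_def, one_mul]
      rw [← h1, ← hz', TT']
    rw [heq]
    exact z.2
  have hctr : ∀ x ∈ M, ctr qh x ∈ K := by
    rintro _ ⟨t, rfl⟩
    induction t using TensorProduct.induction_on with
    | zero => rw [map_zero, map_zero]; exact K.zero_mem
    | tmul a b =>
      have hab : F.toLinearMap (a ⊗ₜ[k] b) = (a : H) ⊗ₜ[k] (b : H) := by simp [hF]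
      rw [hab, ctr_tmul]
      exact K.smul_mem a.2 _
    | add x y hx hy => rw [map_add, map_add]; exact K.add_mem hx hy
  have hbetaS : ∀ b : H, b ∈ K → qh.beta * qh.antipode b ∈ K := fun b hb => by
    rw [← ctr_P qh b]
    exact hctr _ (hPmem b hb)
  refine ⟨?_, ?_, ?_⟩
  · intro x hx
    rw [← S_from_w qh x]
    obtain ⟨t, ht⟩ := hw
    rw [← ht]
    clear ht
    induction t using TensorProduct.induction_on with
    | zero => rw [map_zero, map_zero, map_zero]; exact K.zero_mem
    | tmul a b =>
      have hab : F.toLinearMap (a ⊗ₜ[k] b) = (a : H) ⊗ₜ[k] (b : H) := by simp [hF]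
      rw [hab, lTensor_tmul]
      simp only [coe_comp, Function.comp_apply, mulLeft_apply, mul'_apply]
      exact K.mul_mem a.2 (hbetaS _ (K.mul_mem hx b.2))
    | add u v hu hv => rw [map_add, map_add, map_add]; exact K.add_mem hu hv
  · rw [← ctr_w qh]
    exact hctr _ hw
  · have h1 := hbetaS 1 K.one_mem
    rwa [qh.isQuasiAntipode.map_one, mul_one] at h1
end

section
/- Let H be a quasi-Hopf algebra and V a finite-dimensional left H-module. Then V* with action (h·f)(v) = f(S(h)v), together with evaluation ev: V*⊗V → k, f⊗v ↦ f(αv), and coevaluation db: k → V⊗V*, 1 ↦ Σᵢ βvᵢ ⊗ vⁱ (for dual bases vᵢ, vⁱ), makes V* a right dual of V in the monoidal category of left H-modules; i.e., the triangle (snake) identities hold with respect to the associativity constraint given by φ. -/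
set_option maxHeartbeats 1000000
set_option synthInstance.maxHeartbeats 400000


open TensorProduct LinearMap

variable {k : Type*} [Field k] {H : Type*} [Ring H] [Algebra k H]

section Monoidal

variable {U V W X : Type*} [AddCommGroup U] [Module k U] [AddCommGroup V] [Module k V]
  [AddCommGroup W] [Module k W] [AddCommGroup X] [Module k X]

/-- `f` is a (unital, multiplicative) action of `H`, i.e. a representation. -/
def IsModuleAction (f : H →ₗ[k] Module.End k U) : Prop :=
  f 1 = 1 ∧ ∀ a b : H, f (a * b) = f a * f b

/-- The diagonal action of `H` on the tensor product of two modules,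
`h • (u ⊗ v) = h₍₁₎u ⊗ h₍₂₎v`. -/
noncomputable def act2 (qb : QuasiBialgebra k H)
    (f : H →ₗ[k] Module.End k U) (g : H →ₗ[k] Module.End k V) :
    H →ₗ[k] Module.End k (U ⊗[k] V) :=
  TensorProduct.homTensorHomMap (RingHom.id k) U V U V ∘ₗ TensorProduct.map f g ∘ₗ qb.comul.toLinearMap

/-- The action of an element of `H⊗H⊗H` on a threefold tensor product of modules. -/
noncomputable def actT3 (f : H →ₗ[k] Module.End k U) (g : H →ₗ[k] Module.End k V)
    (e : H →ₗ[k] Module.End k W) :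
    H ⊗[k] (H ⊗[k] H) →ₗ[k] Module.End k (U ⊗[k] (V ⊗[k] W)) :=
  TensorProduct.homTensorHomMap (RingHom.id k) U (V ⊗[k] W) U (V ⊗[k] W) ∘ₗ
    TensorProduct.map f
      (TensorProduct.homTensorHomMap (RingHom.id k) V W V W ∘ₗ TensorProduct.map g e)

/-- The associativity constraint `(u⊗v)⊗w ↦ φ⁽¹⁾u ⊗ (φ⁽²⁾v ⊗ φ⁽³⁾w)` of the category
of left `H`-modules over a quasibialgebra. -/
noncomputable def assocMap (qb : QuasiBialgebra k H) (f : H →ₗ[k] Module.End k U)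
    (g : H →ₗ[k] Module.End k V) (e : H →ₗ[k] Module.End k W) :
    (U ⊗[k] V) ⊗[k] W →ₗ[k] U ⊗[k] (V ⊗[k] W) :=
  actT3 f g e qb.assoc ∘ₗ (TensorProduct.assoc k U V W).toLinearMap

/-- The trivial action of `H` on the unit object `k`, via the counit. -/
noncomputable def unitAct (qb : QuasiBialgebra k H) : H →ₗ[k] Module.End k k :=
  qb.counit.toLinearMap.smulRight (1 : Module.End k k)

end Monoidal

section
variable {U V W : Type*} [AddCommGroup U] [Module k U] [AddCommGroup V] [Module k V]
  [AddCommGroup W] [Module k W]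

/-- The inverse associativity constraint, given by the action of `φ⁻¹`. -/
noncomputable def assocInvMap (qb : QuasiBialgebra k H) (f : H →ₗ[k] Module.End k U)
    (g : H →ₗ[k] Module.End k V) (e : H →ₗ[k] Module.End k W) :
    U ⊗[k] (V ⊗[k] W) →ₗ[k] (U ⊗[k] V) ⊗[k] W :=
  (TensorProduct.assoc k U V W).symm.toLinearMap ∘ₗ actT3 f g e qb.assocInv
end

variable {V : Type*} [AddCommGroup V] [Module k V] [FiniteDimensional k V]

/-- The dual action `(h·f)(v) = f(S(h)v)` on the linear dual of a module. -/
noncomputable def dualAct (qh : QuasiHopf k H) (ρ : H →ₗ[k] Module.End k V) :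
    H →ₗ[k] Module.End k (Module.Dual k V) :=
  Module.Dual.transpose (R := k) (M := V) (M' := V) ∘ₗ ρ ∘ₗ qh.antipode

/-- Evaluation `f ⊗ v ↦ f(α v)`. -/
noncomputable def dualEv (qh : QuasiHopf k H) (ρ : H →ₗ[k] Module.End k V) :
    Module.Dual k V ⊗[k] V →ₗ[k] k :=
  contractLeft k V ∘ₗ LinearMap.lTensor (Module.Dual k V) (ρ qh.alpha)

/-- Coevaluation `1 ↦ Σ β vᵢ ⊗ vⁱ`. -/
noncomputable def dualDb (qh : QuasiHopf k H) (ρ : H →ₗ[k] Module.End k V) :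
    k →ₗ[k] V ⊗[k] Module.Dual k V :=
  LinearMap.rTensor (Module.Dual k V) (ρ qh.beta) ∘ₗ coevaluation k V



section AuxProofs

private lemma coord_collapse {W : Type*} [AddCommGroup W] [Module k W]
    (A : V →ₗ[k] W) (x : V) :
    ∑ i, (Module.Basis.ofVectorSpace k V).coord i x • A ((Module.Basis.ofVectorSpace k V) i) = A x := by
  calc ∑ i, (Module.Basis.ofVectorSpace k V).coord i x • A ((Module.Basis.ofVectorSpace k V) i)
      = A (∑ i, (Module.Basis.ofVectorSpace k V).repr x i • (Module.Basis.ofVectorSpace k V) i) := by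
        simp [Module.Basis.coord_apply, map_sum, map_smul]
    _ = A x := by rw [Module.Basis.sum_repr]

private lemma coev_move (C D : V →ₗ[k] V) :
    ∑ i, C ((Module.Basis.ofVectorSpace k V) i) ⊗ₜ[k] ((Module.Basis.ofVectorSpace k V).coord i ∘ₗ D)
      = ∑ i, C (D ((Module.Basis.ofVectorSpace k V) i)) ⊗ₜ[k] (Module.Basis.ofVectorSpace k V).coord i := by
  set b := Module.Basis.ofVectorSpace k V with hb
  have h1 : ∀ i, (b.coord i) ∘ₗ D = ∑ j, b.coord i (D (b j)) • b.coord j := by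
    intro i
    refine b.ext fun m => ?_
    simp only [LinearMap.coe_comp, Function.comp_apply, LinearMap.sum_apply,
      LinearMap.smul_apply, smul_eq_mul]
    rw [Finset.sum_eq_single m]
    · simp [Module.Basis.coord_apply, Module.Basis.repr_self]
    · intro x _ hx
      simp [Module.Basis.coord_apply, Module.Basis.repr_self, Finsupp.single_eq_of_ne hx]
    · intro hm; exact absurd (Finset.mem_univ m) hm
  calc ∑ i, C (b i) ⊗ₜ[k] (b.coord i ∘ₗ D)
      = ∑ i, ∑ j, b.coord i (D (b j)) • (C (b i) ⊗ₜ[k] b.coord j) := by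
        simp only [h1, tmul_sum, tmul_smul]
    _ = ∑ j, ∑ i, b.coord i (D (b j)) • (C (b i) ⊗ₜ[k] b.coord j) := Finset.sum_comm
    _ = ∑ j, C (D (b j)) ⊗ₜ[k] b.coord j := by
        refine Finset.sum_congr rfl fun j _ => ?_
        calc ∑ i, b.coord i (D (b j)) • (C (b i) ⊗ₜ[k] b.coord j)
            = (∑ i, b.coord i (D (b j)) • C (b i)) ⊗ₜ[k] b.coord j := by
              rw [sum_tmul]; simp only [smul_tmul']
          _ = C (D (b j)) ⊗ₜ[k] b.coord j := by rw [coord_collapse]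

private lemma keyEv (qh : QuasiHopf k H) (ρ : H →ₗ[k] Module.End k V)
    (hρ : IsModuleAction ρ) (t : H ⊗[k] H) :
    dualEv qh ρ ∘ₗ (TensorProduct.homTensorHomMap (RingHom.id k) (Module.Dual k V) V (Module.Dual k V) V)
        ((TensorProduct.map (dualAct qh ρ) ρ) t)
      = contractLeft k V ∘ₗ LinearMap.lTensor (Module.Dual k V)
          (ρ (LinearMap.mul' k H ((TensorProduct.map
            (LinearMap.mulRight k qh.alpha ∘ₗ qh.antipode) LinearMap.id) t))) := by
  induction t using TensorProduct.induction_on with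
  | zero => simp
  | add x y hx hy =>
      simp only [map_add, LinearMap.comp_add, LinearMap.add_comp, hx, hy, LinearMap.lTensor_add]
  | tmul a bb =>
      refine TensorProduct.ext' fun f v => ?_
      simp only [TensorProduct.map_tmul, TensorProduct.homTensorHomMap_apply,
        LinearMap.comp_apply, LinearMap.lTensor_tmul, contractLeft_apply,
        LinearMap.mul'_apply, LinearMap.id_apply, LinearMap.mulRight_apply,
        dualEv, dualAct, Module.Dual.transpose_apply, hρ.2, Module.End.mul_apply]

private lemma keyDb (qh : QuasiHopf k H) (ρ : H →ₗ[k] Module.End k V)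
    (hρ : IsModuleAction ρ) (t : H ⊗[k] H) :
    (TensorProduct.homTensorHomMap (RingHom.id k) V (Module.Dual k V) V (Module.Dual k V))
        ((TensorProduct.map ρ (dualAct qh ρ)) t) (dualDb qh ρ 1)
      = LinearMap.rTensor (Module.Dual k V)
          (ρ (LinearMap.mul' k H ((TensorProduct.map LinearMap.id
            (LinearMap.mulLeft k qh.beta ∘ₗ qh.antipode)) t)))
          (coevaluation k V 1) := by
  induction t using TensorProduct.induction_on with
  | zero => simp
  | add x y hx hy =>
      simp only [map_add, LinearMap.add_apply, hx, hy, LinearMap.rTensor_add]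
  | tmul a bb =>
      have hdb : dualDb qh ρ 1
          = ∑ i, ρ qh.beta ((Module.Basis.ofVectorSpace k V) i) ⊗ₜ[k] (Module.Basis.ofVectorSpace k V).coord i := by
        simp [dualDb, coevaluation_apply_one, map_sum]
      have hmove := coev_move (k := k) (V := V) (ρ a ∘ₗ ρ qh.beta) (ρ (qh.antipode bb))
      simp only [LinearMap.comp_apply] at hmove
      simp only [TensorProduct.map_tmul, TensorProduct.homTensorHomMap_apply, hdb, map_sum,
        TensorProduct.map_tmul, dualAct, LinearMap.comp_apply, Module.Dual.transpose_apply,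
        coevaluation_apply_one, LinearMap.rTensor_tmul, LinearMap.mul'_apply,
        LinearMap.id_apply, LinearMap.mulLeft_apply, hρ.2, Module.End.mul_apply, hmove]

private lemma keySnake1 (qh : QuasiHopf k H) (ρ : H →ₗ[k] Module.End k V)
    (hρ : IsModuleAction ρ) (t : H ⊗[k] (H ⊗[k] H)) (v : V) :
    (TensorProduct.rid k V) ((LinearMap.lTensor V (dualEv qh ρ))
        ((actT3 ρ (dualAct qh ρ) ρ t)
          ((TensorProduct.assoc k V (Module.Dual k V) V) ((dualDb qh ρ 1) ⊗ₜ[k] v))))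
      = ρ (LinearMap.mul' k H ((TensorProduct.map (LinearMap.mulRight k qh.beta)
          (LinearMap.mul' k H ∘ₗ TensorProduct.map
            (LinearMap.mulRight k qh.alpha ∘ₗ qh.antipode) LinearMap.id)) t)) v := by
  induction t using TensorProduct.induction_on with
  | zero => simp
  | add x y hx hy => simp only [map_add, LinearMap.add_apply, hx, hy]
  | tmul a bb =>
      induction bb using TensorProduct.induction_on with
      | zero => simp [TensorProduct.tmul_zero]
      | add x y hx hy =>
          simp only [TensorProduct.tmul_add, map_add, LinearMap.add_apply] at hx hy ⊢
          rw [hx, hy]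
      | tmul b c =>
        have hdb : dualDb qh ρ 1
            = ∑ i, ρ qh.beta ((Module.Basis.ofVectorSpace k V) i) ⊗ₜ[k] (Module.Basis.ofVectorSpace k V).coord i := by
          simp [dualDb, coevaluation_apply_one, map_sum]
        have hcol := coord_collapse (k := k) (V := V) (ρ a ∘ₗ ρ qh.beta)
          (ρ (qh.antipode b) (ρ qh.alpha (ρ c v)))
        simp only [LinearMap.comp_apply] at hcol
        simp only [actT3, hdb, TensorProduct.sum_tmul, map_sum, TensorProduct.map_tmul,
          LinearMap.comp_apply, TensorProduct.assoc_tmul, TensorProduct.homTensorHomMap_apply,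
          LinearMap.lTensor_tmul, dualEv, dualAct, Module.Dual.transpose_apply,
          contractLeft_apply, TensorProduct.rid_tmul, LinearMap.mul'_apply,
          LinearMap.mulRight_apply, LinearMap.id_apply, hρ.2, Module.End.mul_apply, hcol]

private lemma keySnake2 (qh : QuasiHopf k H) (ρ : H →ₗ[k] Module.End k V)
    (hρ : IsModuleAction ρ) (t : H ⊗[k] (H ⊗[k] H)) (f : Module.Dual k V) (w : V) :
    (TensorProduct.lid k (Module.Dual k V)) ((LinearMap.rTensor (Module.Dual k V) (dualEv qh ρ))
        ((TensorProduct.assoc k (Module.Dual k V) V (Module.Dual k V)).symm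
          ((actT3 (dualAct qh ρ) ρ (dualAct qh ρ) t) (f ⊗ₜ[k] (dualDb qh ρ 1))))) w
      = f (ρ (LinearMap.mul' k H ((TensorProduct.map
          (LinearMap.mulRight k qh.alpha ∘ₗ qh.antipode)
          (LinearMap.mul' k H ∘ₗ TensorProduct.map
            (LinearMap.mulRight k qh.beta) qh.antipode)) t)) w) := by
  induction t using TensorProduct.induction_on with
  | zero => simp
  | add x y hx hy =>
      simp only [map_add, LinearMap.add_apply, hx, hy]
  | tmul a bb =>
      induction bb using TensorProduct.induction_on with
      | zero => simp [TensorProduct.tmul_zero]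
      | add x y hx hy =>
          simp only [TensorProduct.tmul_add, map_add, LinearMap.add_apply] at hx hy ⊢
          rw [hx, hy]
      | tmul b c =>
        have hdb : dualDb qh ρ 1
            = ∑ i, ρ qh.beta ((Module.Basis.ofVectorSpace k V) i) ⊗ₜ[k] (Module.Basis.ofVectorSpace k V).coord i := by
          simp [dualDb, coevaluation_apply_one, map_sum]
        have hcol := coord_collapse (k := k) (V := V) (W := k)
          (f ∘ₗ (ρ (qh.antipode a) ∘ₗ (ρ qh.alpha ∘ₗ (ρ b ∘ₗ ρ qh.beta))))
          (ρ (qh.antipode c) w)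
        simp only [LinearMap.comp_apply] at hcol
        simp only [actT3, hdb, TensorProduct.tmul_sum, map_sum, TensorProduct.map_tmul,
          LinearMap.comp_apply, TensorProduct.homTensorHomMap_apply,
          LinearMap.sum_apply, TensorProduct.assoc_symm_tmul, LinearMap.rTensor_tmul,
          dualEv, dualAct, Module.Dual.transpose_apply, LinearMap.lTensor_tmul,
          contractLeft_apply, TensorProduct.lid_tmul, LinearMap.smul_apply,
          LinearMap.mul'_apply, LinearMap.mulRight_apply, LinearMap.id_apply,
          hρ.2, Module.End.mul_apply]
        rw [← hcol]
        refine Finset.sum_congr rfl fun i _ => ?_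
        simp [Module.Basis.coord_apply, smul_eq_mul, mul_comm]

end AuxProofs

/-- For a finite-dimensional module `V` over a quasi-Hopf algebra `H`,
the dual space `V*` with the `S`-twisted action, together with the `α`-twisted evaluation
and `β`-twisted coevaluation, is a right dual of `V` in the monoidal category of left
`H`-modules: both maps are `H`-linear and the snake identities hold w.r.t. the
`φ`-associator. -/
theorem dual_module_is_right_dual (qh : QuasiHopf k H)
    (ρ : H →ₗ[k] Module.End k V) (hρ : IsModuleAction ρ) :
    -- the dual action is a module structure
    IsModuleAction (dualAct qh ρ) ∧
    -- evaluation is `H`-linear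
    (∀ h : H, dualEv qh ρ ∘ₗ act2 qh.toQuasiBialgebra (dualAct qh ρ) ρ h
      = qh.counit h • dualEv qh ρ) ∧
    -- coevaluation is `H`-linear
    (∀ h : H, act2 qh.toQuasiBialgebra ρ (dualAct qh ρ) h (dualDb qh ρ 1)
      = qh.counit h • dualDb qh ρ 1) ∧
    -- first snake identity
    ((TensorProduct.rid k V).toLinearMap
        ∘ₗ LinearMap.lTensor V (dualEv qh ρ)
        ∘ₗ assocMap qh.toQuasiBialgebra ρ (dualAct qh ρ) ρ
        ∘ₗ LinearMap.rTensor V (dualDb qh ρ)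
        ∘ₗ (TensorProduct.lid k V).symm.toLinearMap
      = LinearMap.id) ∧
    -- second snake identity
    ((TensorProduct.lid k (Module.Dual k V)).toLinearMap
        ∘ₗ LinearMap.rTensor (Module.Dual k V) (dualEv qh ρ)
        ∘ₗ assocInvMap qh.toQuasiBialgebra (dualAct qh ρ) ρ (dualAct qh ρ)
        ∘ₗ LinearMap.lTensor (Module.Dual k V) (dualDb qh ρ)
        ∘ₗ (TensorProduct.rid k (Module.Dual k V)).symm.toLinearMap
      = LinearMap.id) := by
  refine ⟨⟨?_, ?_⟩, ?_, ?_, ?_, ?_⟩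
  · -- dual action preserves 1
    ext f v
    simp [dualAct, Module.Dual.transpose_apply, qh.isQuasiAntipode.map_one, hρ.1]
  · -- dual action is multiplicative
    intro a b
    ext f v
    simp [dualAct, Module.Dual.transpose_apply, qh.isQuasiAntipode.map_mul, hρ.2,
      Module.End.mul_apply]
  · -- evaluation is H-linear
    intro h
    have h2 : dualEv qh ρ ∘ₗ act2 qh.toQuasiBialgebra (dualAct qh ρ) ρ h
        = dualEv qh ρ ∘ₗ (TensorProduct.homTensorHomMap (RingHom.id k) (Module.Dual k V) V
            (Module.Dual k V) V) ((TensorProduct.map (dualAct qh ρ) ρ) (qh.comul h)) := rfl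
    rw [h2, keyEv qh ρ hρ, qh.isQuasiAntipode.antipode_left h]
    refine TensorProduct.ext' fun f v => ?_
    simp [dualEv, map_smul]
  · -- coevaluation is H-linear
    intro h
    have h2 : act2 qh.toQuasiBialgebra ρ (dualAct qh ρ) h (dualDb qh ρ 1)
        = (TensorProduct.homTensorHomMap (RingHom.id k) V (Module.Dual k V) V (Module.Dual k V))
            ((TensorProduct.map ρ (dualAct qh ρ)) (qh.comul h)) (dualDb qh ρ 1) := rfl
    rw [h2, keyDb qh ρ hρ, qh.isQuasiAntipode.antipode_right h, map_smul]
    simp [dualDb, coevaluation_apply_one, map_sum, Finset.smul_sum, TensorProduct.smul_tmul']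
  · -- first snake identity
    refine LinearMap.ext fun v => ?_
    have key := keySnake1 qh ρ hρ qh.assoc v
    rw [qh.isQuasiAntipode.assoc_antipode, hρ.1] at key
    simp only [LinearMap.comp_apply, LinearMap.id_apply, LinearEquiv.coe_coe,
      TensorProduct.lid_symm_apply, LinearMap.rTensor_tmul, assocMap]
    simpa using key
  · -- second snake identity
    refine LinearMap.ext fun f => ?_
    refine LinearMap.ext fun w => ?_
    have key := keySnake2 qh ρ hρ qh.assocInv f w
    rw [qh.isQuasiAntipode.assocInv_antipode, hρ.1] at key
    simp only [LinearMap.comp_apply, LinearMap.id_apply, LinearEquiv.coe_coe,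
      TensorProduct.rid_symm_apply, LinearMap.lTensor_tmul, assocInvMap]
    simpa using key
end
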